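/- arXiv:1911.01011 — 2 statements merged into one kernel-verified Lean document; each statement's English description precedes it below -/
import Mathlib

section
/- For every x∈'𝔣⁺ and all y',y''∈ ̂'𝔣⁻, one has ρ⁺(x)(y'y'') = Σ ρ⁺(x₁)(y')·ρ⁺(x₂)(y''), where Δ₊(x)=Σ x₁⊗x₂. -/
open scoped TensorProduct

noncomputable section

/-- A Cartan datum on `I`. -/
structure CartanDatum (I : Type) where
  c : I → I → ℤ
  symm : ∀ i j, c i j = c j i
  pos : ∀ i, 0 < c i i
  even : ∀ i, Even (c i i)
  dvd : ∀ i j, i ≠ j → c i i ∣ 2 * c i j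
  nonpos : ∀ i j, i ≠ j → 2 * c i j ≤ 0

namespace CartanDatum

variable {I : Type} (cd : CartanDatum I)

/-- `d i = (i·i)/2`. -/
def d (i : I) : ℤ := cd.c i i / 2

/-- `a i j = 2(i·j)/(i·i)`. -/
def a (i j : I) : ℤ := 2 * cd.c i j / cd.c i i

/-- Extension of the pairing to `ℕ[I] × ℕ[I]`. -/
def dotN (ν μ : I →₀ ℕ) : ℤ :=
  ν.sum fun i m => μ.sum fun j n => (m : ℤ) * (n : ℤ) * cd.c i j

end CartanDatum

/-- A multiplicative bilinear form `ℕ[I] × ℕ[I] → 𝔽`. -/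
structure MultForm (I 𝔽 : Type) [Field 𝔽] where
  f : (I →₀ ℕ) → (I →₀ ℕ) → 𝔽
  add_left : ∀ ν ν' μ, f (ν + ν') μ = f ν μ * f ν' μ
  add_right : ∀ μ ν ν', f μ (ν + ν') = f μ ν * f μ ν'
  ne_zero : ∀ ν μ, f ν μ ≠ 0

/-- The trivial multiplicative bilinear form, constantly `1`. -/
def trivMF (I 𝔽 : Type) [Field 𝔽] : MultForm I 𝔽 :=
  ⟨fun _ _ => 1, fun _ _ _ => by ring, fun _ _ _ => by ring, fun _ _ => one_ne_zero⟩

variable {I : Type}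

/-- The generator `i` of `ℕ[I]`. -/
def δN (i : I) : I →₀ ℕ := Finsupp.single i 1

/-- The model for the free algebra `'𝔣` on the `θ i`. -/
abbrev FA (𝔽 I : Type) [Field 𝔽] := MonoidAlgebra 𝔽 (FreeMonoid I)

/-- The generator `θ i` of `'𝔣`. -/
def θ (𝔽 : Type) [Field 𝔽] {I : Type} (i : I) : FA 𝔽 I :=
  MonoidAlgebra.of 𝔽 (FreeMonoid I) (FreeMonoid.of i)

/-- The `ℕ[I]`-degree of a word. -/
def wt [DecidableEq I] (w : FreeMonoid I) : I →₀ ℕ :=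
  Multiset.toFinsupp (↑(FreeMonoid.toList w))

/-- Homogeneity of degree `ν` in `'𝔣`. -/
def IsHomog {𝔽 : Type} [Field 𝔽] [DecidableEq I] (ν : I →₀ ℕ) (x : FA 𝔽 I) : Prop :=
  ∀ w ∈ Finsupp.support (x.coeff : FreeMonoid I →₀ 𝔽), wt w = ν

/-- The model for `'𝔣 ⊗ '𝔣` (basis: pairs of words). -/
abbrev TA (𝔽 I : Type) [Field 𝔽] := MonoidAlgebra 𝔽 (FreeMonoid I × FreeMonoid I)

/-- The tensor `x ⊗ y` in the model of `'𝔣 ⊗ '𝔣`. -/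
def tmul {𝔽 : Type} [Field 𝔽] (x y : FA 𝔽 I) : TA 𝔽 I :=
  Finsupp.sum (x.coeff : FreeMonoid I →₀ 𝔽) fun w a =>
    Finsupp.sum (y.coeff : FreeMonoid I →₀ 𝔽) fun u b =>
      MonoidAlgebra.ofCoeff (Finsupp.single (w, u) (a * b) : (FreeMonoid I × FreeMonoid I) →₀ 𝔽)

/-- The twisted multiplication on `'𝔣 ⊗ '𝔣`:
`(x₁⊗x₂)(y₁⊗y₂) = v^{-|y₁|·|x₂|} β(|x₂|,|y₁|) x₁y₁ ⊗ x₂y₂`. -/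
def tMul [DecidableEq I] {𝔽 : Type} [Field 𝔽] (cd : CartanDatum I) (v : 𝔽)
    (β : MultForm I 𝔽) (z z' : TA 𝔽 I) : TA 𝔽 I :=
  Finsupp.sum (z.coeff : (FreeMonoid I × FreeMonoid I) →₀ 𝔽) fun p a =>
    Finsupp.sum (z'.coeff : (FreeMonoid I × FreeMonoid I) →₀ 𝔽) fun q b =>
      MonoidAlgebra.ofCoeff (Finsupp.single (p.1 * q.1, p.2 * q.2)
        (a * b * v ^ (-(cd.dotN (wt q.1) (wt p.2))) * β.f (wt p.2) (wt q.1))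
        : (FreeMonoid I × FreeMonoid I) →₀ 𝔽)

/-- The bilinear form on `'𝔣 ⊗ '𝔣` induced by a form `B` on `'𝔣`:
`(x₁⊗x₂, y₁⊗y₂) = α(|x₁|,|x₂|) (x₁,y₁) (x₂,y₂)` for homogeneous `x₁, x₂`. -/
def pairT [DecidableEq I] {𝔽 : Type} [Field 𝔽] (α : MultForm I 𝔽)
    (B : FA 𝔽 I →ₗ[𝔽] FA 𝔽 I →ₗ[𝔽] 𝔽) (z z' : TA 𝔽 I) : 𝔽 :=
  Finsupp.sum (z.coeff : (FreeMonoid I × FreeMonoid I) →₀ 𝔽) fun p a =>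
    Finsupp.sum (z'.coeff : (FreeMonoid I × FreeMonoid I) →₀ 𝔽) fun q b =>
      a * b * α.f (wt p.1) (wt p.2)
        * B (MonoidAlgebra.single p.1 1) (MonoidAlgebra.single q.1 1)
        * B (MonoidAlgebra.single p.2 1) (MonoidAlgebra.single q.2 1)

/-- The quantum integer `[n]_c`. -/
def qnum {𝔽 : Type} [Field 𝔽] (c : 𝔽) (n : ℕ) : 𝔽 :=
  (c ^ (n : ℤ) - c ^ (-(n : ℤ))) / (c - c⁻¹)

/-- The quantum factorial `[n]_c!`. -/
def qfact {𝔽 : Type} [Field 𝔽] (c : 𝔽) (n : ℕ) : 𝔽 :=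
  ∏ k ∈ Finset.range n, qnum c (k + 1)

/-- The divided power `θ_i^{(n)} = θ_i^n / [n]_{v_i}!`. -/
def θdiv [DecidableEq I] {𝔽 : Type} [Field 𝔽] (cd : CartanDatum I) (v : 𝔽)
    (i : I) (n : ℕ) : FA 𝔽 I :=
  (qfact (v ^ cd.d i) n)⁻¹ • (θ 𝔽 i) ^ n

/-- The twisted quantum Serre element
`D_{ij} = Σ_{k+k'=1-a_{ij}} (-1)^k β(i,j)^{-k} θ_i^{(k)} θ_j θ_i^{(k')}`. -/
def Dij [DecidableEq I] {𝔽 : Type} [Field 𝔽] (cd : CartanDatum I) (v : 𝔽)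
    (g : I → I → 𝔽) (i j : I) : FA 𝔽 I :=
  ∑ k ∈ Finset.range ((1 - cd.a i j).toNat + 1),
    ((-1 : 𝔽) ^ k * ((g i j)⁻¹) ^ k) •
      (θdiv cd v i k * θ 𝔽 j * θdiv cd v i ((1 - cd.a i j).toNat - k))

end
noncomputable section

variable {I : Type}

/-- The generator `i` of `ℤ[I]`. -/
def δZ (i : I) : I →₀ ℤ := Finsupp.single i 1

/-- The inclusion `ℕ[I] → ℤ[I]`. -/
def nz (ν : I →₀ ℕ) : I →₀ ℤ := Finsupp.mapRange (fun n : ℕ => (n : ℤ)) rfl ν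

/-- The multiplicative extension to `ℤ[I] × ℤ[I]` of generator values `g : I → I → 𝔽`. -/
def extZ {𝔽 : Type} [Field 𝔽] (g : I → I → 𝔽) (ν μ : I →₀ ℤ) : 𝔽 :=
  ν.prod fun i m => μ.prod fun j n => g i j ^ (m * n)

/-- The form `⟨i,j⟩ = v^{-i·j} β(i,j) ξ(j,i)`, extended multiplicatively to `ℤ[I]`. -/
def ang {𝔽 : Type} [Field 𝔽] (cd : CartanDatum I) (v : 𝔽) (βg ξg : I → I → 𝔽) :
    (I →₀ ℤ) → (I →₀ ℤ) → 𝔽 :=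
  extZ fun i j => v ^ (-(cd.c i j)) * βg i j * ξg j i

/-- The monomial in `F : I → A` associated with a word `w`. -/
def wordProd {A : Type} [Monoid A] (F : I → A) (w : FreeMonoid I) : A :=
  ((FreeMonoid.toList w).map F).prod

/-- `x` is homogeneous of degree `μ` in the subalgebra generated by the image of `F`. -/
def HomogIn (𝔽 : Type) [Field 𝔽] [DecidableEq I] {A : Type} [Ring A] [Algebra 𝔽 A]
    (F : I → A) (μ : I →₀ ℕ) (x : A) : Prop :=
  x ∈ Submodule.span 𝔽 {z | ∃ w, wt w = μ ∧ z = wordProd F w}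

end
noncomputable def LLaux {𝔽 Ap Am : Type} [Field 𝔽] [Ring Ap] [Algebra 𝔽 Ap]
    [Ring Am] [Algebra 𝔽 Am]
    (ρ : Ap →ₗ[𝔽] Module.End 𝔽 Am) (y' y'' : Am) : Ap ⊗[𝔽] Ap →ₗ[𝔽] Am :=
  TensorProduct.lift (LinearMap.mk₂ 𝔽 (fun p q => ρ p y' * ρ q y'')
    (fun p p' q => by simp [add_mul])
    (fun c p q => by simp [smul_mul_assoc])
    (fun p q q' => by simp [mul_add])
    (fun c p q => by simp [mul_smul_comm]))

@[simp] lemma LLaux_tmul {𝔽 Ap Am : Type} [Field 𝔽] [Ring Ap] [Algebra 𝔽 Ap]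
    [Ring Am] [Algebra 𝔽 Am]
    (ρ : Ap →ₗ[𝔽] Module.End 𝔽 Am) (y' y'' : Am) (a b : Ap) :
    LLaux ρ y' y'' (a ⊗ₜ[𝔽] b) = ρ a y' * ρ b y'' := rfl

theorem rho_plus_sweedler
    {I : Type} [Fintype I] [DecidableEq I] (cd : CartanDatum I)
    {𝔽 : Type} [Field 𝔽] [CharZero 𝔽] (v : 𝔽) (hv : Transcendental ℚ v)
    (βg ξg : I → I → 𝔽)
    (hββ : ∀ i j, βg i j * βg j i = 1) (hβii : ∀ i, βg i i = 1)
    (hξsymm : ∀ i j, ξg i j = ξg j i) (hξne : ∀ i j, ξg i j ≠ 0)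
    {Ap : Type} [Ring Ap] [Algebra 𝔽 Ap]
    (E : I → Ap) (K Jp : (I →₀ ℤ) → Ap)
    (hK0 : K 0 = 1) (hKadd : ∀ a b, K (a + b) = K a * K b)
    (hJ0 : Jp 0 = 1) (hJadd : ∀ a b, Jp (a + b) = Jp a * Jp b)
    (hKJ : ∀ a b, K a * Jp b = Jp b * K a)
    (hKE : ∀ i j : I, K (δZ i) * E j = ang cd v βg ξg (δZ i) (δZ j) • (E j * K (δZ i)))
    (hJE : ∀ i j : I, Jp (δZ i) * E j = ξg j i • (E j * Jp (δZ i)))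
    (bp : Module.Basis ((I →₀ ℤ) × FreeMonoid I × (I →₀ ℤ)) 𝔽 Ap)
    (hbp : ∀ p, bp p = K p.1 * wordProd E p.2.1 * Jp p.2.2)
    {Am : Type} [Ring Am] [Algebra 𝔽 Am]
    (F : I → Am) (K' J' : (I →₀ ℤ) → Am)
    (hK'0 : K' 0 = 1) (hK'add : ∀ a b, K' (a + b) = K' a * K' b)
    (hJ'0 : J' 0 = 1) (hJ'add : ∀ a b, J' (a + b) = J' a * J' b)
    (hK'J' : ∀ a b, K' a * J' b = J' b * K' a)
    (hK'F : ∀ i j : I, K' (δZ i) * F j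
      = (ang cd v βg ξg (δZ j) (δZ i) * (ξg i j)⁻¹) • (F j * K' (δZ i)))
    (hJ'F : ∀ i j : I, J' (δZ i) * F j = F j * J' (δZ i))
    (bm : Module.Basis ((I →₀ ℤ) × FreeMonoid I × (I →₀ ℤ)) 𝔽 Am)
    (hbm : ∀ p, bm p = K' p.1 * wordProd F p.2.1 * J' p.2.2)
    (cK cJ : (I →₀ ℤ) → (Am →ₗ[𝔽] Am))
    (hcK : ∀ (ν τ₁ τ₂ : I →₀ ℤ) (w : FreeMonoid I),
      cK ν (K' τ₁ * wordProd F w * J' τ₂)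
        = (ang cd v βg ξg ν τ₁ * ang cd v βg ξg ν (nz (wt w))) • (K' τ₁ * wordProd F w * J' τ₂))
    (hcJ : ∀ (ν τ₁ τ₂ : I →₀ ℤ) (w : FreeMonoid I),
      cJ ν (K' τ₁ * wordProd F w * J' τ₂)
        = (extZ ξg τ₁ ν * extZ ξg (nz (wt w)) ν) • (K' τ₁ * wordProd F w * J' τ₂))
    (iS : I → (Am →ₗ[𝔽] Am))
    (hiS0 : ∀ (j : I) (τ₁ τ₂ : I →₀ ℤ), iS j (K' τ₁ * J' τ₂) = 0)
    (hiSF : ∀ j i : I, iS j (F i) = if i = j then ξg i j • (1 : Am) else 0)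
    (hiSmul : ∀ (j : I) (x y : Am), iS j (x * y) = iS j x * cJ (δZ j) y + cK (δZ j) x * iS j y)
    (ρ : Ap →ₗ[𝔽] Module.End 𝔽 Am)
    (hρanti : ∀ x y : Ap, ρ (x * y) = ρ y * ρ x) (hρ1 : ρ 1 = 1)
    (hρE : ∀ j : I, ρ (E j) = (v ^ (-(cd.d j)) - v ^ (cd.d j))⁻¹ • iS j)
    (hρK : ∀ i : I, ρ (K (δZ i)) = cK (δZ i))
    (hρKinv : ∀ i : I, ρ (K (-(δZ i))) = cK (-(δZ i)))
    (hρJ : ∀ i : I, ρ (Jp (δZ i)) = cJ (δZ i))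
    (hρJinv : ∀ i : I, ρ (Jp (-(δZ i))) = cJ (-(δZ i)))
    (Δp : Ap →ₐ[𝔽] (Ap ⊗[𝔽] Ap))
    (hΔpE : ∀ i, Δp (E i) = E i ⊗ₜ[𝔽] Jp (δZ i) + K (δZ i) ⊗ₜ[𝔽] E i)
    (hΔpK : ∀ ν, Δp (K ν) = K ν ⊗ₜ[𝔽] K ν) (hΔpJ : ∀ ν, Δp (Jp ν) = Jp ν ⊗ₜ[𝔽] Jp ν)
    :
    ∀ x ∈ Algebra.adjoin 𝔽 (Set.range E), ∀ (y' y'' : Am) (n : ℕ) (a b : Fin n → Ap),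
      Δp x = ∑ k, a k ⊗ₜ[𝔽] b k →
      ρ x (y' * y'') = ∑ k, ρ (a k) y' * ρ (b k) y'' := by
  suffices h : ∀ x ∈ Algebra.adjoin 𝔽 (Set.range E), ∀ y' y'' : Am,
      ρ x (y' * y'') = LLaux ρ y' y'' (Δp x) by
    intro x hx y' y'' n a b hΔ
    rw [h x hx y' y'', hΔ, map_sum]
    simp
  intro x hx
  induction hx using Algebra.adjoin_induction with
  | mem z hz =>
    obtain ⟨i, rfl⟩ := hz
    intro y' y''
    rw [hΔpE, map_add, LLaux_tmul, LLaux_tmul, hρE, hρK, hρJ]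
    simp only [LinearMap.smul_apply]
    rw [hiSmul]
    simp [smul_add, smul_mul_assoc, mul_smul_comm]
  | algebraMap r =>
    intro y' y''
    simp [Algebra.algebraMap_eq_smul_one, hρ1, Algebra.TensorProduct.one_def,
      smul_mul_assoc]
  | add p q hp hq ihp ihq =>
    intro y' y''
    rw [map_add, map_add]
    simp only [LinearMap.add_apply, ihp y' y'', ihq y' y'', map_add]
  | mul p q hp hq ihp ihq =>
    intro y' y''
    have key2 : ∀ (a b : Ap) (y' y'' : Am) (s : Ap ⊗[𝔽] Ap),
        LLaux ρ (ρ a y') (ρ b y'') s = LLaux ρ y' y'' ((a ⊗ₜ[𝔽] b) * s) := by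
      intro a b u u' s
      induction s using TensorProduct.induction_on with
      | zero => simp
      | tmul c d =>
        rw [Algebra.TensorProduct.tmul_mul_tmul, LLaux_tmul, LLaux_tmul,
          hρanti a c, hρanti b d]
        rfl
      | add s t hs ht => rw [mul_add, map_add, map_add, hs, ht]
    have key1 : ∀ t : Ap ⊗[𝔽] Ap, ρ q (LLaux ρ y' y'' t) = LLaux ρ y' y'' (t * Δp q) := by
      intro t
      induction t using TensorProduct.induction_on with
      | zero => simp
      | tmul a b =>
        rw [LLaux_tmul, ihq (ρ a y') (ρ b y''), key2]
      | add s t hs ht => rw [add_mul, map_add, map_add, map_add, hs, ht]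
    have : ρ (p * q) (y' * y'') = ρ q (ρ p (y' * y'')) := by rw [hρanti]; rfl
    rw [this, ihp y' y'', key1, map_mul Δp p q]
end

section
/- The bilinear form φ(x,y)=ε₋(ρ⁺(x)(y)) is a skew-Hopf pairing of the Hopf algebras ̂'𝔣⁺ and ̂'𝔣⁻; that is, for all x,x',x''∈ ̂'𝔣⁺ and y,y',y''∈ ̂'𝔣⁻: φ(1,y)=ε₋(y), φ(x,1)=ε₊(x), φ(x,y'y'')=φ(Δ₊(x),y'⊗y''), φ(x'x'',y)=φ(x'⊗x'',Δ₋^{op}(y)), and φ(S₊(x),y)=φ(x,S₋^{−1}(y)). -/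
open scoped TensorProduct

set_option linter.unusedSectionVars false
set_option maxHeartbeats 2000000

noncomputable section AuxLemmas
variable {I : Type}

theorem finsuppZ_induction (p : (I →₀ ℤ) → Prop) (h0 : p 0)
    (hp : ∀ (i : I) ν, p ν → p (δZ i + ν))
    (hm : ∀ (i : I) ν, p ν → p (-δZ i + ν)) : ∀ ν, p ν := by
  intro ν
  induction ν using Finsupp.induction with
  | zero => exact h0
  | single_add a b f _ _ hf =>
    have key : ∀ b : ℤ, p (Finsupp.single a b + f) := by
      intro b
      induction b using Int.induction_on with
      | zero => simpa using hf
      | succ n ih =>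
        have e : Finsupp.single a ((n:ℤ) + 1) + f = Finsupp.single a 1 + (Finsupp.single a (n:ℤ) + f) := by
          rw [← add_assoc, ← Finsupp.single_add]; ring_nf
        rw [e, show (Finsupp.single a (1:ℤ) : I →₀ ℤ) = δZ a from rfl]
        exact hp a _ ih
      | pred n ih =>
        have e : Finsupp.single a (-(n:ℤ) - 1) + f = Finsupp.single a (-1) + (Finsupp.single a (-(n:ℤ)) + f) := by
          rw [← add_assoc, ← Finsupp.single_add]; ring_nf
        rw [e, show (Finsupp.single a (-1) : I →₀ ℤ) = -δZ a by simp [δZ]]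
        exact hm a _ ih
    exact key b

section GenA
variable [DecidableEq I] {𝔽 : Type} [Field 𝔽] {g : I → I → 𝔽}

theorem extZ_ne_zero (hg : ∀ i j, g i j ≠ 0) (ν μ : I →₀ ℤ) : extZ g ν μ ≠ 0 := by
  apply Finsupp.prod_ne_zero_iff.mpr
  intro i _
  exact Finsupp.prod_ne_zero_iff.mpr fun j _ => zpow_ne_zero _ (hg i j)

theorem extZ_zero_left (g : I → I → 𝔽) (μ : I →₀ ℤ) : extZ g 0 μ = 1 := by
  simp [extZ]

theorem extZ_zero_right (g : I → I → 𝔽) (ν : I →₀ ℤ) : extZ g ν 0 = 1 := by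
  simp [extZ, Finsupp.prod]

theorem extZ_add_left (hg : ∀ i j, g i j ≠ 0) (ν ν' μ : I →₀ ℤ) :
    extZ g (ν + ν') μ = extZ g ν μ * extZ g ν' μ := by
  apply Finsupp.prod_add_index
  · intro i _; simp [Finsupp.prod]
  · intro i _ m m'
    rw [← Finsupp.prod_mul]
    apply Finsupp.prod_congr
    intro j _
    rw [add_mul, zpow_add₀ (hg i j)]

theorem extZ_add_right (hg : ∀ i j, g i j ≠ 0) (ν μ μ' : I →₀ ℤ) :
    extZ g ν (μ + μ') = extZ g ν μ * extZ g ν μ' := by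
  unfold extZ
  have key : ∀ (i : I) (m : ℤ), ((μ + μ').prod fun j n => g i j ^ (m * n)) =
      (μ.prod fun j n => g i j ^ (m * n)) * (μ'.prod fun j n => g i j ^ (m * n)) := by
    intro i m
    apply Finsupp.prod_add_index
    · intro j _; simp
    · intro j _ n n'; rw [mul_add, zpow_add₀ (hg i j)]
  rw [show (ν.prod fun i m => (μ + μ').prod fun j n => g i j ^ (m * n)) =
      ν.prod (fun i m => (μ.prod fun j n => g i j ^ (m * n)) *
        (μ'.prod fun j n => g i j ^ (m * n))) from Finsupp.prod_congr fun i _ => key i _,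
    Finsupp.prod_mul]

theorem extZ_neg_left (hg : ∀ i j, g i j ≠ 0) (ν μ : I →₀ ℤ) :
    extZ g (-ν) μ = (extZ g ν μ)⁻¹ := by
  have h := extZ_add_left hg ν (-ν) μ
  rw [add_neg_cancel, extZ_zero_left] at h
  exact (inv_eq_of_mul_eq_one_right h.symm).symm

theorem extZ_neg_right (hg : ∀ i j, g i j ≠ 0) (ν μ : I →₀ ℤ) :
    extZ g ν (-μ) = (extZ g ν μ)⁻¹ := by
  have h := extZ_add_right hg ν μ (-μ)
  rw [add_neg_cancel, extZ_zero_right] at h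
  exact (inv_eq_of_mul_eq_one_right h.symm).symm

theorem extZ_single (g : I → I → 𝔽) (i j : I) : extZ g (δZ i) (δZ j) = g i j := by
  unfold extZ δZ
  rw [Finsupp.prod_single_index, Finsupp.prod_single_index] <;>
    simp [Finsupp.prod_single_index]

end GenA

theorem nz_zero : nz (0 : I →₀ ℕ) = 0 := by simp [nz]
theorem nz_add (a b : I →₀ ℕ) : nz (a + b) = nz a + nz b := by
  simp [nz, Finsupp.mapRange_add]
theorem nz_single (i : I) : nz (δN i) = δZ i := by simp [nz, δN, δZ]

section WtA
variable [DecidableEq I]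
theorem wt_one : wt (1 : FreeMonoid I) = 0 := by simp [wt]
theorem wt_mul (w u : FreeMonoid I) : wt (w * u) = wt w + wt u := by
  simp only [wt, show FreeMonoid.toList (w*u) = FreeMonoid.toList w ++ FreeMonoid.toList u
    from rfl, ← Multiset.coe_add, Multiset.toFinsupp_add]
theorem wt_of (i : I) : wt (FreeMonoid.of i) = δN i := by
  simp [wt, FreeMonoid.toList_of, δN]
end WtA

section WPA
variable {A : Type} [Monoid A] (F : I → A)
theorem wordProd_one : wordProd F 1 = 1 := rfl
theorem wordProd_of (i : I) : wordProd F (FreeMonoid.of i) = F i := by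
  simp [wordProd, FreeMonoid.toList_of]
theorem wordProd_mul (w u : FreeMonoid I) :
    wordProd F (w * u) = wordProd F w * wordProd F u := by
  simp only [wordProd, show FreeMonoid.toList (w*u) = FreeMonoid.toList w ++ FreeMonoid.toList u
    from rfl, List.map_append, List.prod_append]
theorem wordProd_of_mul (i : I) (w : FreeMonoid I) :
    wordProd F (FreeMonoid.of i * w) = F i * wordProd F w := by
  rw [wordProd_mul, wordProd_of]
end WPA

theorem of_mul_ne_one (i : I) (w : FreeMonoid I) : FreeMonoid.of i * w ≠ 1 := by
  intro h
  have h2 := congrArg FreeMonoid.toList h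
  rw [show FreeMonoid.toList (FreeMonoid.of i * w)
      = FreeMonoid.toList (FreeMonoid.of i) ++ FreeMonoid.toList w from rfl,
    FreeMonoid.toList_of] at h2
  simp at h2

theorem tdecomp {𝔽 M N : Type} [Field 𝔽] [AddCommGroup M] [AddCommGroup N] [Module 𝔽 M]
    [Module 𝔽 N] (t : M ⊗[𝔽] N) :
    ∃ (n : ℕ) (a : Fin n → M) (b : Fin n → N), t = ∑ k, a k ⊗ₜ[𝔽] b k := by
  induction t using TensorProduct.induction_on with
  | zero => exact ⟨0, ![], ![], by simp⟩
  | tmul x y => exact ⟨1, ![x], ![y], by simp⟩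
  | add s t hs ht =>
    obtain ⟨n, a, b, rfl⟩ := hs; obtain ⟨m, c, d, rfl⟩ := ht
    refine ⟨n + m, Fin.append a c, Fin.append b d, ?_⟩
    rw [Fin.sum_univ_add]; simp [Fin.append]

theorem adjoinInd {R A : Type} [CommSemiring R] [Semiring A] [Algebra R A] {s : Set A}
    (hs : Algebra.adjoin R s = ⊤) {p : A → Prop}
    (mem : ∀ x ∈ s, p x) (alg : ∀ r : R, p (algebraMap R A r))
    (add : ∀ a b, p a → p b → p (a + b)) (mul : ∀ a b, p a → p b → p (a * b)) :
    ∀ x, p x := by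
  intro x
  have hx : x ∈ Algebra.adjoin R s := by rw [hs]; trivial
  exact Algebra.adjoin_induction mem alg (fun a b _ _ => add a b) (fun a b _ _ => mul a b) hx

theorem basisInd {R M ι : Type} [CommRing R] [AddCommGroup M] [Module R M] (b : Module.Basis ι R M)
    {p : M → Prop} (h0 : p 0) (hb : ∀ i, p (b i))
    (hadd : ∀ x y, p x → p y → p (x + y)) (hsmul : ∀ (c : R) x, p x → p (c • x)) : ∀ x, p x := by
  intro x
  have hx : x ∈ Submodule.span R (Set.range b) := by rw [b.span_eq]; trivial
  exact Submodule.span_induction (fun a ha => by obtain ⟨i, rfl⟩ := ha; exact hb i) h0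
    (fun a b _ _ => hadd a b) (fun c a _ => hsmul c a) hx

theorem skew_inv {𝔽 A : Type} [Field 𝔽] [Ring A] [Algebra 𝔽 A] (u u' x : A) (s : 𝔽)
    (hs : s ≠ 0) (h1 : u * u' = 1) (h2 : u' * u = 1) (h : u * x = s • (x * u)) :
    u' * x = s⁻¹ • (x * u') := by
  have hx : x * u = s⁻¹ • (u * x) := by
    rw [h, smul_smul, inv_mul_cancel₀ hs, one_smul]
  calc u' * x = u' * x * (u * u') := by rw [h1, mul_one]
    _ = u' * (x * u) * u' := by noncomm_ring
    _ = s⁻¹ • (u' * (u * x) * u') := by rw [hx]; simp [mul_smul_comm, smul_mul_assoc]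
    _ = s⁻¹ • (x * u') := by rw [← mul_assoc, h2, one_mul]

theorem sum_swap4 {M : Type} [AddCommMonoid M] {n1 n2 m1 m2 : ℕ}
    (f : Fin m1 → Fin m2 → Fin n2 → Fin n1 → M) :
    (∑ s, ∑ t, ∑ l, ∑ k, f s t l k) = ∑ k, ∑ l, ∑ s, ∑ t, f s t l k := by
  have h1 : ∀ (g : Fin m2 → Fin n2 → Fin n1 → M),
      (∑ t, ∑ l, ∑ k, g t l k) = ∑ l, ∑ k, ∑ t, g t l k := by
    intro g
    rw [Finset.sum_comm]
    exact Finset.sum_congr rfl fun l _ => Finset.sum_comm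
  have h2 : ∀ (g : Fin m1 → Fin n2 → Fin n1 → M),
      (∑ s, ∑ l, ∑ k, g s l k) = ∑ l, ∑ k, ∑ s, g s l k := by
    intro g
    rw [Finset.sum_comm]
    exact Finset.sum_congr rfl fun l _ => Finset.sum_comm
  calc (∑ s, ∑ t, ∑ l, ∑ k, f s t l k) = ∑ s, ∑ l, ∑ k, ∑ t, f s t l k :=
        Finset.sum_congr rfl fun s _ => h1 _
    _ = ∑ l, ∑ k, ∑ s, ∑ t, f s t l k := h2 _
    _ = ∑ k, ∑ l, ∑ s, ∑ t, f s t l k := Finset.sum_comm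

end AuxLemmas
theorem phi_skew_hopf_pairing
    {I : Type} [Fintype I] [DecidableEq I] (cd : CartanDatum I)
    {𝔽 : Type} [Field 𝔽] [CharZero 𝔽] (v : 𝔽) (hv : Transcendental ℚ v)
    (βg ξg : I → I → 𝔽)
    (hββ : ∀ i j, βg i j * βg j i = 1) (hβii : ∀ i, βg i i = 1)
    (hξsymm : ∀ i j, ξg i j = ξg j i) (hξne : ∀ i j, ξg i j ≠ 0)
    {Ap : Type} [Ring Ap] [Algebra 𝔽 Ap]
    (E : I → Ap) (K Jp : (I →₀ ℤ) → Ap)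
    (hK0 : K 0 = 1) (hKadd : ∀ a b, K (a + b) = K a * K b)
    (hJ0 : Jp 0 = 1) (hJadd : ∀ a b, Jp (a + b) = Jp a * Jp b)
    (hKJ : ∀ a b, K a * Jp b = Jp b * K a)
    (hKE : ∀ i j : I, K (δZ i) * E j = ang cd v βg ξg (δZ i) (δZ j) • (E j * K (δZ i)))
    (hJE : ∀ i j : I, Jp (δZ i) * E j = ξg j i • (E j * Jp (δZ i)))
    (bp : Module.Basis ((I →₀ ℤ) × FreeMonoid I × (I →₀ ℤ)) 𝔽 Ap)
    (hbp : ∀ p, bp p = K p.1 * wordProd E p.2.1 * Jp p.2.2)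
    {Am : Type} [Ring Am] [Algebra 𝔽 Am]
    (F : I → Am) (K' J' : (I →₀ ℤ) → Am)
    (hK'0 : K' 0 = 1) (hK'add : ∀ a b, K' (a + b) = K' a * K' b)
    (hJ'0 : J' 0 = 1) (hJ'add : ∀ a b, J' (a + b) = J' a * J' b)
    (hK'J' : ∀ a b, K' a * J' b = J' b * K' a)
    (hK'F : ∀ i j : I, K' (δZ i) * F j
      = (ang cd v βg ξg (δZ j) (δZ i) * (ξg i j)⁻¹) • (F j * K' (δZ i)))
    (hJ'F : ∀ i j : I, J' (δZ i) * F j = F j * J' (δZ i))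
    (bm : Module.Basis ((I →₀ ℤ) × FreeMonoid I × (I →₀ ℤ)) 𝔽 Am)
    (hbm : ∀ p, bm p = K' p.1 * wordProd F p.2.1 * J' p.2.2)
    (cK cJ : (I →₀ ℤ) → (Am →ₗ[𝔽] Am))
    (hcK : ∀ (ν τ₁ τ₂ : I →₀ ℤ) (w : FreeMonoid I),
      cK ν (K' τ₁ * wordProd F w * J' τ₂)
        = (ang cd v βg ξg ν τ₁ * ang cd v βg ξg ν (nz (wt w))) • (K' τ₁ * wordProd F w * J' τ₂))
    (hcJ : ∀ (ν τ₁ τ₂ : I →₀ ℤ) (w : FreeMonoid I),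
      cJ ν (K' τ₁ * wordProd F w * J' τ₂)
        = (extZ ξg τ₁ ν * extZ ξg (nz (wt w)) ν) • (K' τ₁ * wordProd F w * J' τ₂))
    (iS : I → (Am →ₗ[𝔽] Am))
    (hiS0 : ∀ (j : I) (τ₁ τ₂ : I →₀ ℤ), iS j (K' τ₁ * J' τ₂) = 0)
    (hiSF : ∀ j i : I, iS j (F i) = if i = j then ξg i j • (1 : Am) else 0)
    (hiSmul : ∀ (j : I) (x y : Am), iS j (x * y) = iS j x * cJ (δZ j) y + cK (δZ j) x * iS j y)
    (ρ : Ap →ₗ[𝔽] Module.End 𝔽 Am)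
    (hρanti : ∀ x y : Ap, ρ (x * y) = ρ y * ρ x) (hρ1 : ρ 1 = 1)
    (hρE : ∀ j : I, ρ (E j) = (v ^ (-(cd.d j)) - v ^ (cd.d j))⁻¹ • iS j)
    (hρK : ∀ i : I, ρ (K (δZ i)) = cK (δZ i))
    (hρKinv : ∀ i : I, ρ (K (-(δZ i))) = cK (-(δZ i)))
    (hρJ : ∀ i : I, ρ (Jp (δZ i)) = cJ (δZ i))
    (hρJinv : ∀ i : I, ρ (Jp (-(δZ i))) = cJ (-(δZ i)))
    (εm : Am →ₐ[𝔽] 𝔽)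
    (hεmF : ∀ i, εm (F i) = 0) (hεmK' : ∀ ν, εm (K' ν) = 1) (hεmJ' : ∀ ν, εm (J' ν) = 1)
    (εp : Ap →ₐ[𝔽] 𝔽)
    (hεpE : ∀ i, εp (E i) = 0) (hεpK : ∀ ν, εp (K ν) = 1) (hεpJ : ∀ ν, εp (Jp ν) = 1)
    (Δp : Ap →ₐ[𝔽] (Ap ⊗[𝔽] Ap))
    (hΔpE : ∀ i, Δp (E i) = E i ⊗ₜ[𝔽] Jp (δZ i) + K (δZ i) ⊗ₜ[𝔽] E i)
    (hΔpK : ∀ ν, Δp (K ν) = K ν ⊗ₜ[𝔽] K ν) (hΔpJ : ∀ ν, Δp (Jp ν) = Jp ν ⊗ₜ[𝔽] Jp ν)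
    (Δm : Am →ₐ[𝔽] (Am ⊗[𝔽] Am))
    (hΔmF : ∀ i, Δm (F i) = J' (δZ i) ⊗ₜ[𝔽] F i + F i ⊗ₜ[𝔽] K' (δZ i))
    (hΔmK' : ∀ ν, Δm (K' ν) = K' ν ⊗ₜ[𝔽] K' ν) (hΔmJ' : ∀ ν, Δm (J' ν) = J' ν ⊗ₜ[𝔽] J' ν)
    (Sp : Ap →ₗ[𝔽] Ap) (hSp1 : Sp 1 = 1) (hSpanti : ∀ x y, Sp (x * y) = Sp y * Sp x)
    (hSpE : ∀ i, Sp (E i) = -(K (-(δZ i)) * E i * Jp (-(δZ i))))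
    (hSpK : ∀ ν, Sp (K ν) = K (-ν)) (hSpJ : ∀ ν, Sp (Jp ν) = Jp (-ν))
    (Sm : Am ≃ₗ[𝔽] Am) (hSm1 : Sm 1 = 1) (hSmanti : ∀ x y, Sm (x * y) = Sm y * Sm x)
    (hSmF : ∀ i, Sm (F i) = -(J' (-(δZ i)) * F i * K' (-(δZ i))))
    (hSmK' : ∀ ν, Sm (K' ν) = K' (-ν)) (hSmJ' : ∀ ν, Sm (J' ν) = J' (-ν))
    :
    (∀ y : Am, εm (ρ 1 y) = εm y) ∧
    (∀ x : Ap, εm (ρ x 1) = εp x) ∧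
    (∀ (x : Ap) (y' y'' : Am) (n : ℕ) (a b : Fin n → Ap),
      Δp x = ∑ k, a k ⊗ₜ[𝔽] b k →
      εm (ρ x (y' * y'')) = ∑ k, εm (ρ (a k) y') * εm (ρ (b k) y'')) ∧
    (∀ (x' x'' : Ap) (y : Am) (n : ℕ) (a b : Fin n → Am),
      Δm y = ∑ k, a k ⊗ₜ[𝔽] b k →
      εm (ρ (x' * x'') y) = ∑ k, εm (ρ x' (b k)) * εm (ρ x'' (a k))) ∧
    (∀ (x : Ap) (y : Am), εm (ρ (Sp x) y) = εm (ρ x (Sm.symm y))) := by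
  classical
  -- scalar basics
  have hv0 : v ≠ 0 := fun h => hv (h ▸ isAlgebraic_zero)
  have hβne : ∀ i j, βg i j ≠ 0 := fun i j => left_ne_zero_of_mul_eq_one (hββ i j)
  have hgne : ∀ i j, (v ^ (-(cd.c i j)) * βg i j * ξg j i) ≠ 0 := fun i j =>
    mul_ne_zero (mul_ne_zero (zpow_ne_zero _ hv0) (hβne i j)) (hξne j i)
  -- ang lemmas
  have hAne : ∀ ν μ, ang cd v βg ξg ν μ ≠ 0 := fun ν μ => extZ_ne_zero hgne ν μ
  have hA0l : ∀ μ, ang cd v βg ξg 0 μ = 1 := fun μ => extZ_zero_left _ μ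
  have hA0r : ∀ ν, ang cd v βg ξg ν 0 = 1 := fun ν => extZ_zero_right _ ν
  have hAal : ∀ ν ν' μ, ang cd v βg ξg (ν + ν') μ
      = ang cd v βg ξg ν μ * ang cd v βg ξg ν' μ := fun ν ν' μ => extZ_add_left hgne ν ν' μ
  have hAar : ∀ ν μ μ', ang cd v βg ξg ν (μ + μ')
      = ang cd v βg ξg ν μ * ang cd v βg ξg ν μ' := fun ν μ μ' => extZ_add_right hgne ν μ μ'
  have hAnl : ∀ ν μ, ang cd v βg ξg (-ν) μ = (ang cd v βg ξg ν μ)⁻¹ := fun ν μ =>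
    extZ_neg_left hgne ν μ
  have hAnr : ∀ ν μ, ang cd v βg ξg ν (-μ) = (ang cd v βg ξg ν μ)⁻¹ := fun ν μ =>
    extZ_neg_right hgne ν μ
  -- extZ ξg lemmas
  have hXne : ∀ ν μ, extZ ξg ν μ ≠ 0 := fun ν μ => extZ_ne_zero hξne ν μ
  have hX0l : ∀ μ, extZ ξg 0 μ = 1 := fun μ => extZ_zero_left _ μ
  have hX0r : ∀ ν, extZ ξg ν 0 = 1 := fun ν => extZ_zero_right _ ν
  have hXal : ∀ ν ν' μ, extZ ξg (ν + ν') μ = extZ ξg ν μ * extZ ξg ν' μ := fun ν ν' μ =>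
    extZ_add_left hξne ν ν' μ
  have hXar : ∀ ν μ μ', extZ ξg ν (μ + μ') = extZ ξg ν μ * extZ ξg ν μ' := fun ν μ μ' =>
    extZ_add_right hξne ν μ μ'
  have hXnl : ∀ ν μ, extZ ξg (-ν) μ = (extZ ξg ν μ)⁻¹ := fun ν μ => extZ_neg_left hξne ν μ
  have hXnr : ∀ ν μ, extZ ξg ν (-μ) = (extZ ξg ν μ)⁻¹ := fun ν μ => extZ_neg_right hξne ν μ
  have hXs : ∀ i j, extZ ξg (δZ i) (δZ j) = ξg i j := fun i j => extZ_single _ i j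
  -- K' and J' units
  have hK'inv : ∀ ν, K' ν * K' (-ν) = 1 := fun ν => by rw [← hK'add]; simp [hK'0]
  have hK'inv' : ∀ ν, K' (-ν) * K' ν = 1 := fun ν => by rw [← hK'add]; simp [hK'0]
  have hJ'inv : ∀ ν, J' ν * J' (-ν) = 1 := fun ν => by rw [← hJ'add]; simp [hJ'0]
  have hJ'inv' : ∀ ν, J' (-ν) * J' ν = 1 := fun ν => by rw [← hJ'add]; simp [hJ'0]
  -- J' commutes with F i, general ν
  have hJ'Fgen : ∀ ν (i : I), J' ν * F i = F i * J' ν := by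
    apply finsuppZ_induction (p := fun ν => ∀ i : I, J' ν * F i = F i * J' ν)
    · intro i; rw [hJ'0, one_mul, mul_one]
    · intro j ν ih i
      rw [hJ'add, mul_assoc, ih i, ← mul_assoc, hJ'F j i, mul_assoc]
    · intro j ν ih i
      have h : J' (-δZ j) * F i = F i * J' (-δZ j) := by
        have := skew_inv (J' (δZ j)) (J' (-δZ j)) (F i) (1:𝔽) one_ne_zero (hJ'inv _) (hJ'inv' _)
          (by rw [hJ'F j i, one_smul])
        rw [this, inv_one, one_smul]
      rw [hJ'add, mul_assoc, ih i, ← mul_assoc, h, mul_assoc]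
  have hJ'Wgen : ∀ ν (w : FreeMonoid I), J' ν * wordProd F w = wordProd F w * J' ν := by
    intro ν w
    induction w using FreeMonoid.inductionOn' with
    | one => rw [wordProd_one, one_mul, mul_one]
    | of_mul i w ih =>
      rw [wordProd_of_mul, ← mul_assoc, hJ'Fgen, mul_assoc, ih, mul_assoc]
  -- K' skew-commutes with F i, general ν
  have hK'Fgen : ∀ ν (i : I), K' ν * F i
      = (ang cd v βg ξg (δZ i) ν * (extZ ξg ν (δZ i))⁻¹) • (F i * K' ν) := by
    apply finsuppZ_induction (p := fun ν => ∀ i : I, K' ν * F i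
      = (ang cd v βg ξg (δZ i) ν * (extZ ξg ν (δZ i))⁻¹) • (F i * K' ν))
    · intro i; rw [hK'0, one_mul, mul_one, hA0r, hX0l, inv_one, one_mul, one_smul]
    · intro j ν ih i
      rw [hK'add, mul_assoc, ih i, mul_smul_comm, ← mul_assoc, hK'F j i,
        smul_mul_assoc, smul_smul, mul_assoc]
      congr 1
      · rw [hAar, hXal, hXs j i]
        field_simp
      · exact mul_assoc _ _ _
    · intro j ν ih i
      have h : K' (-δZ j) * F i
          = (ang cd v βg ξg (δZ i) (δZ j) * (ξg j i)⁻¹)⁻¹ • (F i * K' (-δZ j)) := by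
        apply skew_inv (K' (δZ j)) (K' (-δZ j)) (F i) _
          (mul_ne_zero (hAne _ _) (inv_ne_zero (hξne j i))) (hK'inv _) (hK'inv' _)
        rw [hK'F j i]
      rw [hK'add, mul_assoc, ih i, mul_smul_comm, ← mul_assoc, h,
        smul_mul_assoc, smul_smul, mul_assoc]
      congr 1
      · rw [hAar, hAnr, hXal, hXnl, hXs j i]
        have h1 := hAne (δZ i) (δZ j)
        have h2 := hξne j i
        have h3 := hAne (δZ i) ν
        have h4 := hXne ν (δZ i)
        field_simp
      · exact mul_assoc _ _ _
  -- K' skew-commutes with words (existential scalar)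
  have hK'Wgen : ∀ ν (w : FreeMonoid I), ∃ s : 𝔽, s ≠ 0 ∧
      K' ν * wordProd F w = s • (wordProd F w * K' ν) := by
    intro ν w
    induction w using FreeMonoid.inductionOn' with
    | one =>
      exact ⟨1, one_ne_zero, by rw [wordProd_one, one_mul, mul_one, one_smul]⟩
    | of_mul i w ih =>
      obtain ⟨s, hs, h⟩ := ih
      refine ⟨(ang cd v βg ξg (δZ i) ν * (extZ ξg ν (δZ i))⁻¹) * s,
        mul_ne_zero (mul_ne_zero (hAne _ _) (inv_ne_zero (hXne _ _))) hs, ?_⟩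
      rw [wordProd_of_mul, ← mul_assoc, hK'Fgen ν i, smul_mul_assoc, mul_assoc, h,
        mul_smul_comm, smul_smul]
      simp only [← mul_assoc]
  -- monomial multiplication
  have monoMul : ∀ (τ₁ : I →₀ ℤ) (w : FreeMonoid I) (τ₂ σ₁ : I →₀ ℤ) (u : FreeMonoid I)
      (σ₂ : I →₀ ℤ), ∃ s : 𝔽,
      (K' τ₁ * wordProd F w * J' τ₂) * (K' σ₁ * wordProd F u * J' σ₂)
        = s • (K' (τ₁ + σ₁) * wordProd F (w * u) * J' (τ₂ + σ₂)) := by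
    intro τ₁ w τ₂ σ₁ u σ₂
    obtain ⟨s, hs, h⟩ := hK'Wgen σ₁ w
    have h' : wordProd F w * K' σ₁ = s⁻¹ • (K' σ₁ * wordProd F w) := by
      rw [h, smul_smul, inv_mul_cancel₀ hs, one_smul]
    refine ⟨s⁻¹, ?_⟩
    calc (K' τ₁ * wordProd F w * J' τ₂) * (K' σ₁ * wordProd F u * J' σ₂)
        = K' τ₁ * wordProd F w * (J' τ₂ * K' σ₁) * wordProd F u * J' σ₂ := by
          noncomm_ring
      _ = K' τ₁ * wordProd F w * (K' σ₁ * J' τ₂) * wordProd F u * J' σ₂ := by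
          rw [hK'J']
      _ = K' τ₁ * (wordProd F w * K' σ₁) * (J' τ₂ * wordProd F u) * J' σ₂ := by
          noncomm_ring
      _ = K' τ₁ * (wordProd F w * K' σ₁) * (wordProd F u * J' τ₂) * J' σ₂ := by
          rw [hJ'Wgen]
      _ = s⁻¹ • (K' τ₁ * (K' σ₁ * wordProd F w) * (wordProd F u * J' τ₂) * J' σ₂) := by
          rw [h']; simp only [mul_smul_comm, smul_mul_assoc]
      _ = s⁻¹ • (K' (τ₁ + σ₁) * wordProd F (w * u) * J' (τ₂ + σ₂)) := by
          rw [hK'add, hJ'add, wordProd_mul]; congr 1; noncomm_ring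
  -- special forms of basis monomials
  have honeAm : (1 : Am) = K' 0 * wordProd F 1 * J' 0 := by
    rw [hK'0, hJ'0, wordProd_one, one_mul, one_mul]
  have hK'sp : ∀ ν, K' ν = K' ν * wordProd F 1 * J' 0 := by
    intro ν; rw [hJ'0, wordProd_one, mul_one, mul_one]
  have hJ'sp : ∀ ν, J' ν = K' 0 * wordProd F 1 * J' ν := by
    intro ν; rw [hK'0, wordProd_one, one_mul, one_mul]
  have hFsp : ∀ i, F i = K' 0 * wordProd F (FreeMonoid.of i) * J' 0 := by
    intro i; rw [hK'0, hJ'0, wordProd_of, one_mul, mul_one]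
  have hKJsp : ∀ τ σ, K' τ * J' σ = K' τ * wordProd F 1 * J' σ := by
    intro τ σ; rw [wordProd_one, mul_one]
  -- cK and cJ evaluations
  have cK_one : ∀ ν, cK ν (1 : Am) = 1 := by
    intro ν
    rw [honeAm, hcK]
    rw [wt_one, nz_zero, hA0r, one_mul, one_smul]
  have cJ_one : ∀ ν, cJ ν (1 : Am) = 1 := by
    intro ν
    rw [honeAm, hcJ]
    rw [wt_one, nz_zero, hX0l, one_mul, one_smul]
  have cK_K' : ∀ ν μ, cK ν (K' μ) = ang cd v βg ξg ν μ • K' μ := by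
    intro ν μ
    rw [hK'sp μ, hcK, wt_one, nz_zero, hA0r, mul_one]
  have cJ_K' : ∀ ν μ, cJ ν (K' μ) = extZ ξg μ ν • K' μ := by
    intro ν μ
    rw [hK'sp μ, hcJ, wt_one, nz_zero, hX0l, mul_one]
  have cK_J' : ∀ ν μ, cK ν (J' μ) = J' μ := by
    intro ν μ
    rw [hJ'sp μ, hcK, wt_one, nz_zero, hA0r, mul_one, one_smul]
  have cJ_J' : ∀ ν μ, cJ ν (J' μ) = J' μ := by
    intro ν μ
    rw [hJ'sp μ, hcJ, wt_one, nz_zero, hX0l, mul_one, one_smul]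
  have cK_F : ∀ ν i, cK ν (F i) = ang cd v βg ξg ν (δZ i) • F i := by
    intro ν i
    rw [hFsp i, hcK, wt_of, nz_single, hA0r, one_mul]
  have cJ_F : ∀ ν i, cJ ν (F i) = extZ ξg (δZ i) ν • F i := by
    intro ν i
    rw [hFsp i, hcJ, wt_of, nz_single, hX0l, one_mul]
  have cK_KJ : ∀ ν τ σ, cK ν (K' τ * J' σ) = ang cd v βg ξg ν τ • (K' τ * J' σ) := by
    intro ν τ σ
    rw [hKJsp, hcK, wt_one, nz_zero, hA0r, mul_one]
  have cJ_KJ : ∀ ν τ σ, cJ ν (K' τ * J' σ) = extZ ξg τ ν • (K' τ * J' σ) := by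
    intro ν τ σ
    rw [hKJsp, hcJ, wt_one, nz_zero, hX0l, mul_one]
  -- iS evaluations
  have iS_one : ∀ j, iS j (1 : Am) = 0 := by
    intro j
    have := hiS0 j 0 0
    rw [hK'0, hJ'0, one_mul] at this
    exact this
  have iS_K' : ∀ j μ, iS j (K' μ) = 0 := by
    intro j μ
    have := hiS0 j μ 0
    rw [hJ'0, mul_one] at this
    exact this
  have iS_J' : ∀ j μ, iS j (J' μ) = 0 := by
    intro j μ
    have := hiS0 j 0 μ
    rw [hK'0, one_mul] at this
    exact this
  -- εm evaluations
  have hεm1 : εm (1 : Am) = 1 := map_one εm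
  have hεsmul : ∀ (c : 𝔽) (y : Am), εm (c • y) = c * εm y := by
    intro c y; rw [map_smul, smul_eq_mul]
  have hεW : ∀ w : FreeMonoid I, εm (wordProd F w) = if w = 1 then 1 else 0 := by
    intro w
    induction w using FreeMonoid.inductionOn' with
    | one => rw [wordProd_one, hεm1, if_pos rfl]
    | of_mul i w _ =>
      rw [wordProd_of_mul, map_mul, hεmF, zero_mul, if_neg (of_mul_ne_one i w)]
  have hεmono : ∀ (τ : I →₀ ℤ) (w : FreeMonoid I) (σ : I →₀ ℤ),
      εm (K' τ * wordProd F w * J' σ) = if w = 1 then 1 else 0 := by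
    intro τ w σ
    rw [map_mul, map_mul, hεmK', hεmJ', one_mul, mul_one, hεW]
  -- multiplicativity of cK, cJ
  have cKmul : ∀ ν (y₁ y₂ : Am), cK ν (y₁ * y₂) = cK ν y₁ * cK ν y₂ := by
    intro ν
    have hbase : ∀ p q, cK ν (bm p * bm q) = cK ν (bm p) * cK ν (bm q) := by
      intro p q
      obtain ⟨s, hs⟩ := monoMul p.1 p.2.1 p.2.2 q.1 q.2.1 q.2.2
      rw [hbm p, hbm q, hs, map_smul, hcK, hcK, hcK, smul_smul, smul_mul_smul_comm, hs,
        smul_smul]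
      congr 1
      rw [hAar, wt_mul, nz_add, hAar]
      ring
    have hstep1 : ∀ q (y₁ : Am), cK ν (y₁ * bm q) = cK ν y₁ * cK ν (bm q) := by
      intro q
      refine basisInd bm ?_ ?_ ?_ ?_
      · simp
      · intro p; exact hbase p q
      · intro x y hx hy; rw [add_mul, map_add, hx, hy, map_add, add_mul]
      · intro c x hx; rw [smul_mul_assoc, map_smul, hx, map_smul, smul_mul_assoc]
    intro y₁
    refine basisInd bm ?_ ?_ ?_ ?_
    · simp
    · intro q; exact hstep1 q y₁
    · intro x y hx hy; rw [mul_add, map_add, hx, hy, map_add, mul_add]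
    · intro c x hx; rw [mul_smul_comm, map_smul, hx, map_smul, mul_smul_comm]
  have cJmul : ∀ ν (y₁ y₂ : Am), cJ ν (y₁ * y₂) = cJ ν y₁ * cJ ν y₂ := by
    intro ν
    have hbase : ∀ p q, cJ ν (bm p * bm q) = cJ ν (bm p) * cJ ν (bm q) := by
      intro p q
      obtain ⟨s, hs⟩ := monoMul p.1 p.2.1 p.2.2 q.1 q.2.1 q.2.2
      rw [hbm p, hbm q, hs, map_smul, hcJ, hcJ, hcJ, smul_smul, smul_mul_smul_comm, hs,
        smul_smul]
      congr 1
      rw [hXal, wt_mul, nz_add, hXal]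
      ring
    have hstep1 : ∀ q (y₁ : Am), cJ ν (y₁ * bm q) = cJ ν y₁ * cJ ν (bm q) := by
      intro q
      refine basisInd bm ?_ ?_ ?_ ?_
      · simp
      · intro p; exact hbase p q
      · intro x y hx hy; rw [add_mul, map_add, hx, hy, map_add, add_mul]
      · intro c x hx; rw [smul_mul_assoc, map_smul, hx, map_smul, smul_mul_assoc]
    intro y₁
    refine basisInd bm ?_ ?_ ?_ ?_
    · simp
    · intro q; exact hstep1 q y₁
    · intro x y hx hy; rw [mul_add, map_add, hx, hy, map_add, mul_add]
    · intro c x hx; rw [mul_smul_comm, map_smul, hx, map_smul, mul_smul_comm]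
  -- compositions
  have cKcomp : ∀ ν (y : Am), cK ν (cK (-ν) y) = y := by
    intro ν
    refine basisInd bm ?_ ?_ ?_ ?_
    · simp
    · intro p
      rw [hbm p, hcK, map_smul, hcK, smul_smul, hAnl, hAnl]
      have h1 := hAne ν p.1
      have h2 := hAne ν (nz (wt p.2.1))
      rw [show (ang cd v βg ξg ν p.1)⁻¹ * (ang cd v βg ξg ν (nz (wt p.2.1)))⁻¹ *
          (ang cd v βg ξg ν p.1 * ang cd v βg ξg ν (nz (wt p.2.1))) = (1:𝔽) from by
        field_simp, one_smul]
    · intro x y hx hy; rw [map_add, map_add, hx, hy]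
    · intro c x hx; rw [map_smul, map_smul, hx]
  have cJcomp : ∀ ν (y : Am), cJ ν (cJ (-ν) y) = y := by
    intro ν
    refine basisInd bm ?_ ?_ ?_ ?_
    · simp
    · intro p
      rw [hbm p, hcJ, map_smul, hcJ, smul_smul, hXnr, hXnr]
      have h1 := hXne p.1 ν
      have h2 := hXne (nz (wt p.2.1)) ν
      rw [show (extZ ξg p.1 ν)⁻¹ * (extZ ξg (nz (wt p.2.1)) ν)⁻¹ *
          (extZ ξg p.1 ν * extZ ξg (nz (wt p.2.1)) ν) = (1:𝔽) from by
        field_simp, one_smul]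
    · intro x y hx hy; rw [map_add, map_add, hx, hy]
    · intro c x hx; rw [map_smul, map_smul, hx]
  -- adjoin tops
  have hMtop : Algebra.adjoin 𝔽 ({x | (∃ i, x = F i) ∨ (∃ ι, x = K' (δZ ι)) ∨
      (∃ ι, x = K' (-δZ ι)) ∨ (∃ ι, x = J' (δZ ι)) ∨ (∃ ι, x = J' (-δZ ι))} : Set Am) = ⊤ := by
    have hKm : ∀ ν, K' ν ∈ Algebra.adjoin 𝔽 ({x | (∃ i, x = F i) ∨ (∃ ι, x = K' (δZ ι)) ∨
        (∃ ι, x = K' (-δZ ι)) ∨ (∃ ι, x = J' (δZ ι)) ∨ (∃ ι, x = J' (-δZ ι))} : Set Am) := by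
      apply finsuppZ_induction
      · rw [hK'0]; exact one_mem _
      · intro i ν ih
        rw [hK'add]
        exact mul_mem (Algebra.subset_adjoin (Or.inr (Or.inl ⟨i, rfl⟩))) ih
      · intro i ν ih
        rw [hK'add]
        exact mul_mem (Algebra.subset_adjoin (Or.inr (Or.inr (Or.inl ⟨i, rfl⟩)))) ih
    have hJm : ∀ ν, J' ν ∈ Algebra.adjoin 𝔽 ({x | (∃ i, x = F i) ∨ (∃ ι, x = K' (δZ ι)) ∨
        (∃ ι, x = K' (-δZ ι)) ∨ (∃ ι, x = J' (δZ ι)) ∨ (∃ ι, x = J' (-δZ ι))} : Set Am) := by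
      apply finsuppZ_induction
      · rw [hJ'0]; exact one_mem _
      · intro i ν ih
        rw [hJ'add]
        exact mul_mem (Algebra.subset_adjoin (Or.inr (Or.inr (Or.inr (Or.inl ⟨i, rfl⟩))))) ih
      · intro i ν ih
        rw [hJ'add]
        exact mul_mem (Algebra.subset_adjoin
          (Or.inr (Or.inr (Or.inr (Or.inr ⟨i, rfl⟩))))) ih
    have hWm : ∀ w : FreeMonoid I, wordProd F w ∈ Algebra.adjoin 𝔽
        ({x | (∃ i, x = F i) ∨ (∃ ι, x = K' (δZ ι)) ∨
        (∃ ι, x = K' (-δZ ι)) ∨ (∃ ι, x = J' (δZ ι)) ∨ (∃ ι, x = J' (-δZ ι))} : Set Am) := by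
      intro w
      induction w using FreeMonoid.inductionOn' with
      | one => rw [wordProd_one]; exact one_mem _
      | of_mul i w ih =>
        rw [wordProd_of_mul]
        exact mul_mem (Algebra.subset_adjoin (Or.inl ⟨i, rfl⟩)) ih
    rw [eq_top_iff]
    intro x _
    have hx : x ∈ Submodule.span 𝔽 (Set.range bm) := by rw [bm.span_eq]; trivial
    have hle : Submodule.span 𝔽 (Set.range bm) ≤ Subalgebra.toSubmodule
        (Algebra.adjoin 𝔽 ({x | (∃ i, x = F i) ∨ (∃ ι, x = K' (δZ ι)) ∨
        (∃ ι, x = K' (-δZ ι)) ∨ (∃ ι, x = J' (δZ ι)) ∨ (∃ ι, x = J' (-δZ ι))} : Set Am)) := by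
      apply Submodule.span_le.mpr
      rintro _ ⟨p, rfl⟩
      rw [hbm p]
      exact Subalgebra.mul_mem _ (Subalgebra.mul_mem _ (hKm p.1) (hWm p.2.1)) (hJm p.2.2)
    exact hle hx
  have hPtop : Algebra.adjoin 𝔽 ({x | (∃ i, x = E i) ∨ (∃ ι, x = K (δZ ι)) ∨
      (∃ ι, x = K (-δZ ι)) ∨ (∃ ι, x = Jp (δZ ι)) ∨ (∃ ι, x = Jp (-δZ ι))} : Set Ap) = ⊤ := by
    have hKm : ∀ ν, K ν ∈ Algebra.adjoin 𝔽 ({x | (∃ i, x = E i) ∨ (∃ ι, x = K (δZ ι)) ∨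
        (∃ ι, x = K (-δZ ι)) ∨ (∃ ι, x = Jp (δZ ι)) ∨ (∃ ι, x = Jp (-δZ ι))} : Set Ap) := by
      apply finsuppZ_induction
      · rw [hK0]; exact one_mem _
      · intro i ν ih
        rw [hKadd]
        exact mul_mem (Algebra.subset_adjoin (Or.inr (Or.inl ⟨i, rfl⟩))) ih
      · intro i ν ih
        rw [hKadd]
        exact mul_mem (Algebra.subset_adjoin (Or.inr (Or.inr (Or.inl ⟨i, rfl⟩)))) ih
    have hJm : ∀ ν, Jp ν ∈ Algebra.adjoin 𝔽 ({x | (∃ i, x = E i) ∨ (∃ ι, x = K (δZ ι)) ∨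
        (∃ ι, x = K (-δZ ι)) ∨ (∃ ι, x = Jp (δZ ι)) ∨ (∃ ι, x = Jp (-δZ ι))} : Set Ap) := by
      apply finsuppZ_induction
      · rw [hJ0]; exact one_mem _
      · intro i ν ih
        rw [hJadd]
        exact mul_mem (Algebra.subset_adjoin (Or.inr (Or.inr (Or.inr (Or.inl ⟨i, rfl⟩))))) ih
      · intro i ν ih
        rw [hJadd]
        exact mul_mem (Algebra.subset_adjoin
          (Or.inr (Or.inr (Or.inr (Or.inr ⟨i, rfl⟩))))) ih
    have hWm : ∀ w : FreeMonoid I, wordProd E w ∈ Algebra.adjoin 𝔽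
        ({x | (∃ i, x = E i) ∨ (∃ ι, x = K (δZ ι)) ∨
        (∃ ι, x = K (-δZ ι)) ∨ (∃ ι, x = Jp (δZ ι)) ∨ (∃ ι, x = Jp (-δZ ι))} : Set Ap) := by
      intro w
      induction w using FreeMonoid.inductionOn' with
      | one => rw [wordProd_one]; exact one_mem _
      | of_mul i w ih =>
        rw [wordProd_of_mul]
        exact mul_mem (Algebra.subset_adjoin (Or.inl ⟨i, rfl⟩)) ih
    rw [eq_top_iff]
    intro x _
    have hx : x ∈ Submodule.span 𝔽 (Set.range bp) := by rw [bp.span_eq]; trivial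
    have hle : Submodule.span 𝔽 (Set.range bp) ≤ Subalgebra.toSubmodule
        (Algebra.adjoin 𝔽 ({x | (∃ i, x = E i) ∨ (∃ ι, x = K (δZ ι)) ∨
        (∃ ι, x = K (-δZ ι)) ∨ (∃ ι, x = Jp (δZ ι)) ∨ (∃ ι, x = Jp (-δZ ι))} : Set Ap)) := by
      apply Submodule.span_le.mpr
      rintro _ ⟨p, rfl⟩
      rw [hbp p]
      exact Subalgebra.mul_mem _ (Subalgebra.mul_mem _ (hKm p.1) (hWm p.2.1)) (hJm p.2.2)
    exact hle hx
  -- induction principles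
  have apInd : ∀ (p : Ap → Prop), (∀ i, p (E i)) → (∀ i, p (K (δZ i))) →
      (∀ i, p (K (-δZ i))) → (∀ i, p (Jp (δZ i))) → (∀ i, p (Jp (-δZ i))) → p 1 →
      (∀ a b, p a → p b → p (a + b)) → (∀ (c : 𝔽) a, p a → p (c • a)) →
      (∀ a b, p a → p b → p (a * b)) → ∀ x, p x := by
    intro p hE hKp hKm hJp hJm h1 hadd hsmul hmul
    refine adjoinInd hPtop ?_ ?_ hadd hmul
    · rintro x (⟨i, rfl⟩ | ⟨i, rfl⟩ | ⟨i, rfl⟩ | ⟨i, rfl⟩ | ⟨i, rfl⟩)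
      exacts [hE i, hKp i, hKm i, hJp i, hJm i]
    · intro r
      rw [Algebra.algebraMap_eq_smul_one]
      exact hsmul r 1 h1
  have amInd : ∀ (p : Am → Prop), (∀ i, p (F i)) → (∀ i, p (K' (δZ i))) →
      (∀ i, p (K' (-δZ i))) → (∀ i, p (J' (δZ i))) → (∀ i, p (J' (-δZ i))) → p 1 →
      (∀ a b, p a → p b → p (a + b)) → (∀ (c : 𝔽) a, p a → p (c • a)) →
      (∀ a b, p a → p b → p (a * b)) → ∀ x, p x := by
    intro p hF hKp hKm hJp hJm h1 hadd hsmul hmul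
    refine adjoinInd hMtop ?_ ?_ hadd hmul
    · rintro x (⟨i, rfl⟩ | ⟨i, rfl⟩ | ⟨i, rfl⟩ | ⟨i, rfl⟩ | ⟨i, rfl⟩)
      exacts [hF i, hKp i, hKm i, hJp i, hJm i]
    · intro r
      rw [Algebra.algebraMap_eq_smul_one]
      exact hsmul r 1 h1
  -- rho helpers
  have hρmulapp : ∀ (x y : Ap) (z : Am), ρ (x * y) z = ρ y (ρ x z) := by
    intro x y z; rw [hρanti]; rfl
  have hρ1app : ∀ z : Am, ρ 1 z = z := by
    intro z; rw [hρ1]; rfl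
  have hρEapp : ∀ (j : I) (z : Am), ρ (E j) z = (v ^ (-(cd.d j)) - v ^ (cd.d j))⁻¹ • iS j z := by
    intro j z; rw [hρE]; rfl
  -- ρ x 1 = εp x • 1
  have rho_one : ∀ x : Ap, ρ x 1 = εp x • 1 := by
    refine apInd _ ?_ ?_ ?_ ?_ ?_ ?_ ?_ ?_ ?_
    · intro i
      rw [hρEapp, iS_one, smul_zero, hεpE, zero_smul]
    · intro i
      rw [hρK, cK_one, hεpK, one_smul]
    · intro i
      rw [hρKinv, cK_one, hεpK, one_smul]
    · intro i
      rw [hρJ, cJ_one, hεpJ, one_smul]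
    · intro i
      rw [hρJinv, cJ_one, hεpJ, one_smul]
    · rw [hρ1app, map_one, one_smul]
    · intro a b ha hb
      rw [map_add, LinearMap.add_apply, ha, hb, map_add, add_smul]
    · intro c a ha
      rw [map_smul, LinearMap.smul_apply, ha, map_smul, smul_smul, smul_eq_mul]
    · intro a b ha hb
      rw [hρmulapp, ha, map_smul, hb, smul_smul, map_mul]
  -- ρ x (K' ν) is scalar multiple of K' ν
  have rhoK' : ∀ (ν : I →₀ ℤ) (x : Ap), ρ x (K' ν) = εm (ρ x (K' ν)) • K' ν := by
    intro ν
    refine apInd _ ?_ ?_ ?_ ?_ ?_ ?_ ?_ ?_ ?_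
    · intro i
      rw [hρEapp, iS_K', smul_zero, map_zero, zero_smul]
    · intro i
      rw [hρK, cK_K', hεsmul, hεmK', mul_one]
    · intro i
      rw [hρKinv, cK_K', hεsmul, hεmK', mul_one]
    · intro i
      rw [hρJ, cJ_K', hεsmul, hεmK', mul_one]
    · intro i
      rw [hρJinv, cJ_K', hεsmul, hεmK', mul_one]
    · rw [hρ1app, hεmK', one_smul]
    · intro a b ha hb
      set sa := εm (ρ a (K' ν)) with hsa
      set sb := εm (ρ b (K' ν)) with hsb
      have h : ρ (a + b) (K' ν) = (sa + sb) • K' ν := by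
        rw [map_add, LinearMap.add_apply, ha, hb, add_smul]
      rw [h, hεsmul, hεmK', mul_one]
    · intro c a ha
      set sa := εm (ρ a (K' ν)) with hsa
      have h : ρ (c • a) (K' ν) = (c * sa) • K' ν := by
        rw [map_smul, LinearMap.smul_apply, ha, smul_smul]
      rw [h, hεsmul, hεmK', mul_one]
    · intro a b ha hb
      set sa := εm (ρ a (K' ν)) with hsa
      set sb := εm (ρ b (K' ν)) with hsb
      have h : ρ (a * b) (K' ν) = (sa * sb) • K' ν := by
        rw [hρmulapp, ha, map_smul, hb, smul_smul, mul_comm]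
      rw [h, hεsmul, hεmK', mul_one]
  -- ρ x (J' ν) = εp x • J' ν
  have rhoJ' : ∀ (ν : I →₀ ℤ) (x : Ap), ρ x (J' ν) = εp x • J' ν := by
    intro ν
    refine apInd _ ?_ ?_ ?_ ?_ ?_ ?_ ?_ ?_ ?_
    · intro i
      rw [hρEapp, iS_J', smul_zero, hεpE, zero_smul]
    · intro i
      rw [hρK, cK_J', hεpK, one_smul]
    · intro i
      rw [hρKinv, cK_J', hεpK, one_smul]
    · intro i
      rw [hρJ, cJ_J', hεpJ, one_smul]
    · intro i
      rw [hρJinv, cJ_J', hεpJ, one_smul]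
    · rw [hρ1app, map_one, one_smul]
    · intro a b ha hb
      rw [map_add, LinearMap.add_apply, ha, hb, map_add, add_smul]
    · intro c a ha
      rw [map_smul, LinearMap.smul_apply, ha, map_smul, smul_smul, smul_eq_mul]
    · intro a b ha hb
      rw [hρmulapp, ha, map_smul, hb, smul_smul, map_mul, mul_comm]
  -- multiplicativity of x ↦ εm (ρ x (K' ν))
  have εKmul : ∀ (ν : I →₀ ℤ) (a b : Ap),
      εm (ρ (a * b) (K' ν)) = εm (ρ a (K' ν)) * εm (ρ b (K' ν)) := by
    intro ν a b
    have ha := rhoK' ν a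
    set sa := εm (ρ a (K' ν)) with hsa
    rw [hρmulapp, ha, map_smul, hεsmul]
  -- structure of ρ x (F i)
  have rhoF : ∀ (i0 : I) (x : Ap),
      ρ x (F i0) = εm (ρ x (K' (δZ i0))) • F i0 + εm (ρ x (F i0)) • 1 := by
    intro i0
    refine apInd _ ?_ ?_ ?_ ?_ ?_ ?_ ?_ ?_ ?_
    · intro j
      simp only [hρEapp]
      rw [hiSF, iS_K', smul_zero, map_zero, zero_smul, zero_add]
      by_cases h : i0 = j
      · subst h
        simp [hεsmul, hεm1, smul_smul]
      · simp [h]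
    · intro j
      rw [hρK, cK_F, cK_K', hεsmul, hεmK', mul_one, hεsmul, hεmF, mul_zero, zero_smul,
        add_zero]
    · intro j
      rw [hρKinv, cK_F, cK_K', hεsmul, hεmK', mul_one, hεsmul, hεmF, mul_zero, zero_smul,
        add_zero]
    · intro j
      rw [hρJ, cJ_F, cJ_K', hεsmul, hεmK', mul_one, hεsmul, hεmF, mul_zero, zero_smul,
        add_zero]
    · intro j
      rw [hρJinv, cJ_F, cJ_K', hεsmul, hεmK', mul_one, hεsmul, hεmF, mul_zero, zero_smul,
        add_zero]
    · simp only [hρ1app]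
      rw [hεmK', hεmF, one_smul, zero_smul, add_zero]
    · intro a b ha hb
      set s1a := εm (ρ a (K' (δZ i0))) with hs1a
      set s2a := εm (ρ a (F i0)) with hs2a
      set s1b := εm (ρ b (K' (δZ i0))) with hs1b
      set s2b := εm (ρ b (F i0)) with hs2b
      have hK : εm (ρ (a + b) (K' (δZ i0))) = s1a + s1b := by
        rw [map_add, LinearMap.add_apply, map_add]
      have h : ρ (a + b) (F i0) = (s1a + s1b) • F i0 + (s2a + s2b) • 1 := by
        rw [map_add, LinearMap.add_apply, ha, hb]
        module
      rw [h, hK, map_add, hεsmul, hεsmul, hεmF, hεm1, mul_zero, mul_one, zero_add]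
    · intro c a ha
      set s1a := εm (ρ a (K' (δZ i0))) with hs1a
      set s2a := εm (ρ a (F i0)) with hs2a
      have hK : εm (ρ (c • a) (K' (δZ i0))) = c * s1a := by
        rw [map_smul, LinearMap.smul_apply, hεsmul]
      have h : ρ (c • a) (F i0) = (c * s1a) • F i0 + (c * s2a) • 1 := by
        rw [map_smul, LinearMap.smul_apply, ha]
        module
      rw [h, hK, map_add, hεsmul, hεsmul, hεmF, hεm1, mul_zero, mul_one, zero_add]
    · intro a b ha hb
      set s1a := εm (ρ a (K' (δZ i0))) with hs1a
      set s2a := εm (ρ a (F i0)) with hs2a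
      set s1b := εm (ρ b (K' (δZ i0))) with hs1b
      set s2b := εm (ρ b (F i0)) with hs2b
      have hK : εm (ρ (a * b) (K' (δZ i0))) = s1a * s1b := εKmul _ a b
      have h : ρ (a * b) (F i0) = (s1a * s1b) • F i0 + (s1a * s2b + s2a * εp b) • 1 := by
        rw [hρmulapp, ha, map_add, map_smul, map_smul, hb, rho_one]
        module
      rw [h, hK, map_add, hεsmul, hεsmul, hεmF, hεm1, mul_zero, mul_one, zero_add]
  -- the pairing on tensor squares
  obtain ⟨pair2, hpair2⟩ : ∃ P : Ap ⊗[𝔽] Ap →ₗ[𝔽] Am ⊗[𝔽] Am →ₗ[𝔽] 𝔽,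
      ∀ (a b : Ap) (c d : Am), P (a ⊗ₜ[𝔽] b) (c ⊗ₜ[𝔽] d) = εm (ρ a c) * εm (ρ b d) := by
    refine ⟨TensorProduct.lift (LinearMap.mk₂ 𝔽
      (fun a b => TensorProduct.lift (LinearMap.mk₂ 𝔽
        (fun c d => εm (ρ a c) * εm (ρ b d))
        (fun c c' d => by simp [map_add, add_mul])
        (fun t c d => by simp [LinearMap.map_smul, hεsmul]; ring)
        (fun c d d' => by simp [map_add, mul_add])
        (fun t c d => by simp [LinearMap.map_smul, hεsmul]; ring)))
      (fun a a' b => ?_) (fun t a b => ?_) (fun a b b' => ?_) (fun t a b => ?_)), ?_⟩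
    · apply TensorProduct.ext'
      intro c d
      simp [map_add, LinearMap.add_apply, add_mul]
    · apply TensorProduct.ext'
      intro c d
      simp [map_smul, LinearMap.smul_apply, hεsmul]
      ring
    · apply TensorProduct.ext'
      intro c d
      simp [map_add, LinearMap.add_apply, mul_add]
    · apply TensorProduct.ext'
      intro c d
      simp [map_smul, LinearMap.smul_apply, hεsmul]
      ring
    · intro a b c d
      simp
  -- the operator coproduct pairing
  obtain ⟨G, hG⟩ : ∃ G : Ap ⊗[𝔽] Ap →ₗ[𝔽] Am →ₗ[𝔽] Am →ₗ[𝔽] Am,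
      ∀ (a b : Ap) (y₁ y₂ : Am), G (a ⊗ₜ[𝔽] b) y₁ y₂ = ρ a y₁ * ρ b y₂ := by
    refine ⟨TensorProduct.lift (LinearMap.mk₂ 𝔽
      (fun a b => (LinearMap.mul 𝔽 Am).compl₁₂ (ρ a) (ρ b))
      (fun a a' b => ?_) (fun t a b => ?_) (fun a b b' => ?_) (fun t a b => ?_)), ?_⟩
    · ext y₁ y₂
      simp [LinearMap.compl₁₂_apply, add_mul]
    · ext y₁ y₂
      simp [LinearMap.compl₁₂_apply]
    · ext y₁ y₂
      simp [LinearMap.compl₁₂_apply, mul_add]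
    · ext y₁ y₂
      simp [LinearMap.compl₁₂_apply]
    · intro a b y₁ y₂
      simp [LinearMap.compl₁₂_apply]
  -- claim C: ρ x (y₁ y₂) = G (Δp x) y₁ y₂
  have Gstep : ∀ (a b : Ap) (t : Ap ⊗[𝔽] Ap) (y₁ y₂ : Am),
      G ((a ⊗ₜ[𝔽] b) * t) y₁ y₂ = G t (ρ a y₁) (ρ b y₂) := by
    intro a b t y₁ y₂
    induction t using TensorProduct.induction_on with
    | zero => rw [mul_zero, map_zero]; rfl
    | tmul a' b' =>
      rw [Algebra.TensorProduct.tmul_mul_tmul, hG, hG, hρmulapp, hρmulapp]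
    | add s t hs ht =>
      rw [mul_add, map_add, LinearMap.add_apply, LinearMap.add_apply, hs, ht, map_add,
        LinearMap.add_apply, LinearMap.add_apply]
  have Cclaim : ∀ (x : Ap) (y₁ y₂ : Am), ρ x (y₁ * y₂) = G (Δp x) y₁ y₂ := by
    refine apInd (fun x => ∀ (y₁ y₂ : Am), ρ x (y₁ * y₂) = G (Δp x) y₁ y₂)
      ?_ ?_ ?_ ?_ ?_ ?_ ?_ ?_ ?_
    · intro i y₁ y₂
      rw [hΔpE, map_add, LinearMap.add_apply, LinearMap.add_apply, hG, hG, hρEapp, hiSmul,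
        smul_add, hρJ, hρK, hρEapp, hρEapp, smul_mul_assoc, mul_smul_comm]
    · intro i y₁ y₂
      rw [hΔpK, hG, hρK]
      exact cKmul _ y₁ y₂
    · intro i y₁ y₂
      rw [hΔpK, hG, hρKinv]
      exact cKmul _ y₁ y₂
    · intro i y₁ y₂
      rw [hΔpJ, hG, hρJ]
      exact cJmul _ y₁ y₂
    · intro i y₁ y₂
      rw [hΔpJ, hG, hρJinv]
      exact cJmul _ y₁ y₂
    · intro y₁ y₂
      rw [hρ1, map_one, Algebra.TensorProduct.one_def, hG]
      simp only [hρ1app]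
      rfl
    · intro a b ha hb y₁ y₂
      rw [map_add, LinearMap.add_apply, ha, hb, map_add]
      simp only [map_add, LinearMap.add_apply]
    · intro c a ha y₁ y₂
      rw [map_smul, LinearMap.smul_apply, ha, map_smul]
      simp only [map_smul, LinearMap.smul_apply]
    · intro a b ha hb y₁ y₂
      have key : ∀ t : Ap ⊗[𝔽] Ap, ρ b (G t y₁ y₂) = G (t * Δp b) y₁ y₂ := by
        intro t
        induction t using TensorProduct.induction_on with
        | zero => rw [zero_mul, map_zero]; simp
        | tmul a' b' =>
          rw [hG, hb (ρ a' y₁) (ρ b' y₂), ← Gstep]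
        | add s t hs ht =>
          rw [map_add, LinearMap.add_apply, LinearMap.add_apply, map_add, hs, ht, add_mul,
            map_add, LinearMap.add_apply, LinearMap.add_apply]
      rw [hρmulapp, ha, key, ← map_mul]
  -- εm ∘ G = pair2
  have εmG : ∀ (t : Ap ⊗[𝔽] Ap) (y₁ y₂ : Am), εm (G t y₁ y₂) = pair2 t (y₁ ⊗ₜ[𝔽] y₂) := by
    intro t y₁ y₂
    induction t using TensorProduct.induction_on with
    | zero => simp
    | tmul a b => rw [hG, map_mul, hpair2]
    | add s t hs ht =>
      rw [map_add, LinearMap.add_apply, LinearMap.add_apply, map_add, hs, ht, map_add,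
        LinearMap.add_apply]
  have P3 : ∀ (x : Ap) (y₁ y₂ : Am), εm (ρ x (y₁ * y₂)) = pair2 (Δp x) (y₁ ⊗ₜ[𝔽] y₂) := by
    intro x y₁ y₂
    rw [Cclaim, εmG]
  -- claim D
  have Dclaim : ∀ (y : Am) (x' x'' : Ap),
      εm (ρ (x' * x'') y) = pair2 (x'' ⊗ₜ[𝔽] x') (Δm y) := by
    refine amInd (fun y => ∀ x' x'', εm (ρ (x' * x'') y) = pair2 (x'' ⊗ₜ[𝔽] x') (Δm y))
      ?_ ?_ ?_ ?_ ?_ ?_ ?_ ?_ ?_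
    · intro i x' x''
      have ha := rhoF i x'
      set s1 := εm (ρ x' (K' (δZ i))) with hs1
      set s2 := εm (ρ x' (F i)) with hs2
      have hL : εm (ρ (x' * x'') (F i)) = s1 * εm (ρ x'' (F i)) + s2 * εp x'' := by
        rw [hρmulapp, ha, map_add, map_smul, map_smul, rho_one x'', map_add, hεsmul,
          hεsmul, hεsmul, hεm1, mul_one]
      rw [hL, hΔmF, map_add, hpair2, hpair2, rhoJ' (δZ i) x'', hεsmul, hεmJ', mul_one]
      ring
    · intro i x' x''
      rw [hΔmK', hpair2, εKmul]
      ring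
    · intro i x' x''
      rw [hΔmK', hpair2, εKmul]
      ring
    · intro i x' x''
      rw [hΔmJ', hpair2, rhoJ' _ (x' * x''), hεsmul, hεmJ', mul_one, map_mul,
        rhoJ' _ x', rhoJ' _ x'', hεsmul, hεsmul, hεmJ', mul_one, mul_one]
      ring
    · intro i x' x''
      rw [hΔmJ', hpair2, rhoJ' _ (x' * x''), hεsmul, hεmJ', mul_one, map_mul,
        rhoJ' _ x', rhoJ' _ x'', hεsmul, hεsmul, hεmJ', mul_one, mul_one]
      ring
    · intro x' x''
      rw [rho_one (x' * x''), hεsmul, hεm1, mul_one, map_mul]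
      rw [show Δm 1 = (1:Am) ⊗ₜ[𝔽] (1:Am) by rw [map_one, Algebra.TensorProduct.one_def]]
      rw [hpair2, rho_one, rho_one, hεsmul, hεsmul, hεm1, mul_one, mul_one]
      ring
    · intro y₁ y₂ h₁ h₂ x' x''
      simp only [map_add]
      rw [h₁ x' x'', h₂ x' x'']
    · intro c y h x' x''
      simp only [map_smul, hεsmul]
      rw [h x' x'']
      simp
    · intro y₁ y₂ h₁ h₂ x' x''
      obtain ⟨n1, a, b, hab⟩ := tdecomp (Δp x')
      obtain ⟨n2, a', b', hab'⟩ := tdecomp (Δp x'')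
      obtain ⟨m1, p, q, hpq⟩ := tdecomp (Δm y₁)
      obtain ⟨m2, p', q', hpq'⟩ := tdecomp (Δm y₂)
      have hL : εm (ρ (x' * x'') (y₁ * y₂)) = ∑ k, ∑ l, ∑ s, ∑ t,
          (εm (ρ (a' l) (p s)) * εm (ρ (a k) (q s))) *
          (εm (ρ (b' l) (p' t)) * εm (ρ (b k) (q' t))) := by
        calc εm (ρ (x' * x'') (y₁ * y₂)) = pair2 (Δp x' * Δp x'') (y₁ ⊗ₜ[𝔽] y₂) := by
              rw [P3, map_mul]
          _ = ∑ k, ∑ l, εm (ρ (a k * a' l) y₁) * εm (ρ (b k * b' l) y₂) := by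
              rw [hab, hab', Finset.sum_mul_sum]
              simp only [Algebra.TensorProduct.tmul_mul_tmul, map_sum, LinearMap.coe_sum,
                Finset.sum_apply, hpair2]
          _ = ∑ k, ∑ l, (pair2 (a' l ⊗ₜ[𝔽] a k) (Δm y₁)) * (pair2 (b' l ⊗ₜ[𝔽] b k) (Δm y₂)) := by
              refine Finset.sum_congr rfl fun k _ => Finset.sum_congr rfl fun l _ => ?_
              rw [h₁ (a k) (a' l), h₂ (b k) (b' l)]
          _ = ∑ k, ∑ l, (∑ s, εm (ρ (a' l) (p s)) * εm (ρ (a k) (q s))) *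
                (∑ t, εm (ρ (b' l) (p' t)) * εm (ρ (b k) (q' t))) := by
              refine Finset.sum_congr rfl fun k _ => Finset.sum_congr rfl fun l _ => ?_
              rw [hpq, hpq', map_sum, map_sum]
              simp only [hpair2]
          _ = _ := by
              refine Finset.sum_congr rfl fun k _ => Finset.sum_congr rfl fun l _ => ?_
              rw [Finset.sum_mul_sum]
      have hR : pair2 (x'' ⊗ₜ[𝔽] x') (Δm (y₁ * y₂)) = ∑ k, ∑ l, ∑ s, ∑ t,
          (εm (ρ (a' l) (p s)) * εm (ρ (b' l) (p' t))) *
          (εm (ρ (a k) (q s)) * εm (ρ (b k) (q' t))) := by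
        calc pair2 (x'' ⊗ₜ[𝔽] x') (Δm (y₁ * y₂))
            = pair2 (x'' ⊗ₜ[𝔽] x') (Δm y₁ * Δm y₂) := by rw [map_mul]
          _ = ∑ s, ∑ t, εm (ρ x'' (p s * p' t)) * εm (ρ x' (q s * q' t)) := by
              rw [hpq, hpq', Finset.sum_mul_sum]
              simp only [Algebra.TensorProduct.tmul_mul_tmul, map_sum, hpair2]
          _ = ∑ s, ∑ t, (pair2 (Δp x'') (p s ⊗ₜ[𝔽] p' t)) * (pair2 (Δp x') (q s ⊗ₜ[𝔽] q' t)) := by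
              refine Finset.sum_congr rfl fun s _ => Finset.sum_congr rfl fun t _ => ?_
              rw [P3, P3]
          _ = ∑ s, ∑ t, (∑ l, εm (ρ (a' l) (p s)) * εm (ρ (b' l) (p' t))) *
                (∑ k, εm (ρ (a k) (q s)) * εm (ρ (b k) (q' t))) := by
              refine Finset.sum_congr rfl fun s _ => Finset.sum_congr rfl fun t _ => ?_
              rw [hab, hab']
              simp only [map_sum, LinearMap.coe_sum, Finset.sum_apply, hpair2]
          _ = ∑ s, ∑ t, ∑ l, ∑ k,
                (εm (ρ (a' l) (p s)) * εm (ρ (b' l) (p' t))) *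
                (εm (ρ (a k) (q s)) * εm (ρ (b k) (q' t))) := by
              refine Finset.sum_congr rfl fun s _ => Finset.sum_congr rfl fun t _ => ?_
              rw [Finset.sum_mul_sum]
          _ = _ := sum_swap4 _
      rw [hL, hR]
      apply Finset.sum_congr rfl; intro k _
      apply Finset.sum_congr rfl; intro l _
      apply Finset.sum_congr rfl; intro s _
      apply Finset.sum_congr rfl; intro t _
      ring
  -- Sm machinery
  have hofne : ∀ j : I, (FreeMonoid.of j : FreeMonoid I) ≠ 1 := by
    intro j
    have := of_mul_ne_one j (1 : FreeMonoid I)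
    rwa [mul_one] at this
  have hSmFn : ∀ j : I, Sm (F j)
      = (-(ang cd v βg ξg (δZ j) (-δZ j) * (extZ ξg (-δZ j) (δZ j))⁻¹)⁻¹)
        • (K' (-δZ j) * wordProd F (FreeMonoid.of j) * J' (-δZ j)) := by
    intro j
    have hsne : ang cd v βg ξg (δZ j) (-δZ j) * (extZ ξg (-δZ j) (δZ j))⁻¹ ≠ 0 :=
      mul_ne_zero (hAne _ _) (inv_ne_zero (hXne _ _))
    have h2 : F j * K' (-δZ j)
        = (ang cd v βg ξg (δZ j) (-δZ j) * (extZ ξg (-δZ j) (δZ j))⁻¹)⁻¹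
          • (K' (-δZ j) * F j) := by
      rw [hK'Fgen (-δZ j) j, smul_smul, inv_mul_cancel₀ hsne, one_smul]
    rw [hSmF, wordProd_of, hJ'Fgen, mul_assoc, ← hK'J', ← mul_assoc, h2, smul_mul_assoc,
      neg_smul]
  obtain ⟨τmap, hτ⟩ : ∃ T : Am ⊗[𝔽] Am →ₗ[𝔽] Am ⊗[𝔽] Am,
      ∀ a b : Am, T (a ⊗ₜ[𝔽] b) = Sm b ⊗ₜ[𝔽] Sm a :=
    ⟨(TensorProduct.comm 𝔽 Am Am).toLinearMap ∘ₗ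
      TensorProduct.map Sm.toLinearMap Sm.toLinearMap, fun a b => by simp⟩
  have τantimul : ∀ u w : Am ⊗[𝔽] Am, τmap (u * w) = τmap w * τmap u := by
    intro u w
    induction u using TensorProduct.induction_on with
    | zero => rw [zero_mul, map_zero, mul_zero]
    | add u₁ u₂ h1 h2 => rw [add_mul, map_add, h1, h2, map_add, mul_add]
    | tmul a b =>
      induction w using TensorProduct.induction_on with
      | zero => rw [mul_zero, map_zero, zero_mul]
      | add w₁ w₂ g1 g2 => rw [mul_add, map_add, g1, g2, map_add, add_mul]
      | tmul c d =>
        rw [Algebra.TensorProduct.tmul_mul_tmul, hτ, hτ, hτ,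
          Algebra.TensorProduct.tmul_mul_tmul, hSmanti, hSmanti]
  have antiSm : ∀ z : Am, Δm (Sm z) = τmap (Δm z) := by
    refine amInd (fun z => Δm (Sm z) = τmap (Δm z)) ?_ ?_ ?_ ?_ ?_ ?_ ?_ ?_ ?_
    · intro i
      rw [hSmF, map_neg, map_mul, map_mul, hΔmJ', hΔmF, hΔmK', map_add, hτ, hτ, hSmF,
        hSmJ', hSmK']
      simp only [mul_add, add_mul, Algebra.TensorProduct.tmul_mul_tmul,
        TensorProduct.neg_tmul, TensorProduct.tmul_neg]
      rw [hJ'inv', one_mul, mul_assoc (J' (-δZ i)) (K' (δZ i)) (K' (-δZ i)), hK'inv,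
        mul_one]
      abel
    · intro i
      rw [hSmK', hΔmK', hΔmK', hτ, hSmK']
    · intro i
      rw [hSmK', hΔmK', hΔmK', hτ, hSmK']
    · intro i
      rw [hSmJ', hΔmJ', hΔmJ', hτ, hSmJ']
    · intro i
      rw [hSmJ', hΔmJ', hΔmJ', hτ, hSmJ']
    · show Δm (Sm 1) = τmap (Δm 1)
      rw [hSm1, map_one, Algebra.TensorProduct.one_def, hτ, hSm1]
    · intro a b ha hb
      rw [map_add, map_add, ha, hb, map_add, map_add]
    · intro c a ha
      rw [map_smul, map_smul, ha, map_smul, map_smul]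
    · intro a b ha hb
      rw [hSmanti, map_mul, ha, hb, map_mul, τantimul]
  have εmSm : ∀ z : Am, εm (Sm z) = εm z := by
    refine amInd (fun z => εm (Sm z) = εm z) ?_ ?_ ?_ ?_ ?_ ?_ ?_ ?_ ?_
    · intro i
      rw [hSmF, map_neg, map_mul, map_mul, hεmJ', hεmK', hεmF]
      simp
    · intro i; rw [hSmK', hεmK', hεmK']
    · intro i; rw [hSmK', hεmK', hεmK']
    · intro i; rw [hSmJ', hεmJ', hεmJ']
    · intro i; rw [hSmJ', hεmJ', hεmJ']
    · show εm (Sm 1) = εm 1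
      rw [hSm1]
    · intro a b ha hb; rw [map_add, map_add, ha, hb, map_add]
    · intro c a ha
      simp only [map_smul, smul_eq_mul]
      rw [ha]
    · intro a b ha hb; rw [hSmanti, map_mul, ha, hb, map_mul, mul_comm]
  -- R_K and R_J
  have R_K : ∀ (ν : I →₀ ℤ) (z : Am), εm (cK (-ν) (Sm z)) = εm (cK ν z) := by
    intro ν
    refine amInd (fun z => εm (cK (-ν) (Sm z)) = εm (cK ν z)) ?_ ?_ ?_ ?_ ?_ ?_ ?_ ?_ ?_
    · intro j
      rw [hSmFn j, map_smul, hcK, cK_F]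
      simp [hεsmul, hεmono, hεmF, hofne]
    · intro i
      simp only [hSmK', cK_K', hεsmul, hεmK', mul_one]
      rw [hAnl, hAnr, inv_inv]
    · intro i
      simp only [hSmK', neg_neg, cK_K', hεsmul, hεmK', mul_one]
      rw [hAnl, hAnr]
    · intro i; simp only [hSmJ', cK_J', hεmJ']
    · intro i; simp only [hSmJ', cK_J', hεmJ']
    · show εm (cK (-ν) (Sm 1)) = εm (cK ν 1)
      simp only [hSm1, cK_one]
    · intro a b ha hb
      simp only [map_add]
      rw [ha, hb]
    · intro c a ha
      simp only [map_smul, smul_eq_mul]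
      rw [ha]
    · intro a b ha hb
      rw [hSmanti, cKmul, map_mul, ha, hb, cKmul, map_mul]
      ring
  have R_J : ∀ (ν : I →₀ ℤ) (z : Am), εm (cJ (-ν) (Sm z)) = εm (cJ ν z) := by
    intro ν
    refine amInd (fun z => εm (cJ (-ν) (Sm z)) = εm (cJ ν z)) ?_ ?_ ?_ ?_ ?_ ?_ ?_ ?_ ?_
    · intro j
      rw [hSmFn j, map_smul, hcJ, cJ_F]
      simp [hεsmul, hεmono, hεmF, hofne]
    · intro i
      simp only [hSmK', cJ_K', hεsmul, hεmK', mul_one]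
      rw [hXnl, hXnr, inv_inv]
    · intro i
      simp only [hSmK', neg_neg, cJ_K', hεsmul, hεmK', mul_one]
      rw [hXnl, hXnr]
    · intro i; simp only [hSmJ', cJ_J', hεmJ']
    · intro i; simp only [hSmJ', cJ_J', hεmJ']
    · show εm (cJ (-ν) (Sm 1)) = εm (cJ ν 1)
      simp only [hSm1, cJ_one]
    · intro a b ha hb
      simp only [map_add]
      rw [ha, hb]
    · intro c a ha
      simp only [map_smul, smul_eq_mul]
      rw [ha]
    · intro a b ha hb
      rw [hSmanti, cJmul, map_mul, ha, hb, cJmul, map_mul]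
      ring
  -- iS on small monomials
  have iS_mono1 : ∀ (i j : I) (τ σ : I →₀ ℤ), iS i (K' τ * F j * J' σ)
      = (if j = i then ang cd v βg ξg (δZ i) τ * ξg j i else 0) • (K' τ * J' σ) := by
    intro i j τ σ
    rw [mul_assoc, hiSmul, iS_K', zero_mul, zero_add, hiSmul, hiSF, cJ_J', iS_J',
      mul_zero, add_zero, cK_K']
    by_cases h : j = i
    · rw [if_pos h, if_pos h, smul_mul_assoc, smul_mul_assoc, one_mul, mul_smul_comm,
        smul_smul]
    · rw [if_neg h, if_neg h, zero_mul, mul_zero, zero_smul]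
  -- the T computation
  have Ti : ∀ (i : I) (z : Am),
      εm (cJ (-δZ i) (iS i (cK (-δZ i) (Sm z)))) = - εm (iS i z) := by
    intro i
    refine amInd (fun z => εm (cJ (-δZ i) (iS i (cK (-δZ i) (Sm z)))) = - εm (iS i z))
      ?_ ?_ ?_ ?_ ?_ ?_ ?_ ?_ ?_
    · intro j
      rw [hSmFn j, map_smul, hcK, wt_of, nz_single, wordProd_of]
      simp only [map_smul]
      rw [iS_mono1]
      simp only [map_smul]
      rw [cJ_KJ, hiSF]
      by_cases h : j = i
      · subst h
        rw [if_pos rfl, if_pos rfl]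
        simp only [hεsmul, map_mul, hεmK', hεmJ', mul_one, map_smul, hεm1, smul_eq_mul]
        simp only [hAnl, hAnr, hXnl, hXnr, hXs, inv_inv]
        have ha := hAne (δZ j) (δZ j)
        have hx := hξne j j
        field_simp
      · rw [if_neg h, if_neg h]
        simp
    · intro μ
      simp only [hSmK', cK_K', map_smul, iS_K', smul_zero, map_zero, neg_zero]
    · intro μ
      simp only [hSmK', cK_K', map_smul, iS_K', smul_zero, map_zero, neg_zero]
    · intro μ
      simp only [hSmJ', cK_J', iS_J', map_zero, neg_zero]
    · intro μ
      simp only [hSmJ', cK_J', iS_J', map_zero, neg_zero]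
    · show εm (cJ (-δZ i) (iS i (cK (-δZ i) (Sm 1)))) = - εm (iS i 1)
      simp only [hSm1, cK_one, iS_one, map_zero, neg_zero]
    · intro a b ha hb
      simp only [map_add]
      rw [ha, hb]
      ring
    · intro c a ha
      simp only [map_smul, smul_eq_mul]
      rw [ha]
      ring
    · intro z₁ z₂ h₁ h₂
      rw [hSmanti, cKmul, hiSmul, map_add, map_add, cJmul, cJmul, map_mul, map_mul]
      have k1 : cJ (-δZ i) (cJ (δZ i) (cK (-δZ i) (Sm z₁))) = cK (-δZ i) (Sm z₁) := by
        have := cJcomp (-δZ i) (cK (-δZ i) (Sm z₁))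
        rwa [neg_neg] at this
      have k2 : cK (δZ i) (cK (-δZ i) (Sm z₂)) = Sm z₂ := cKcomp (δZ i) (Sm z₂)
      rw [k1, k2, h₁, h₂, R_K (δZ i) z₁, R_J (δZ i) z₂, hiSmul, map_add, map_mul, map_mul]
      ring
  -- main antipode claim
  have Qclaim : ∀ (x : Ap) (z : Am), εm (ρ (Sp x) (Sm z)) = εm (ρ x z) := by
    refine apInd (fun x => ∀ z, εm (ρ (Sp x) (Sm z)) = εm (ρ x z)) ?_ ?_ ?_ ?_ ?_ ?_ ?_ ?_ ?_
    · intro i z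
      rw [hSpE, map_neg, LinearMap.neg_apply, map_neg]
      rw [hρmulapp, hρmulapp, hρKinv, hρJinv, hρEapp, map_smul, hεsmul, Ti i z, hρEapp,
        hεsmul]
      ring
    · intro i z
      rw [hSpK, hρKinv, hρK]
      exact R_K (δZ i) z
    · intro i z
      have h := R_K (-δZ i) z
      rw [neg_neg] at h
      rw [hSpK, neg_neg, hρK, hρKinv]
      exact h
    · intro i z
      rw [hSpJ, hρJinv, hρJ]
      exact R_J (δZ i) z
    · intro i z
      have h := R_J (-δZ i) z
      rw [neg_neg] at h
      rw [hSpJ, neg_neg, hρJ, hρJinv]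
      exact h
    · intro z
      rw [hSp1, hρ1app, hρ1app, εmSm]
    · intro a b ha hb z
      simp only [map_add, LinearMap.add_apply]
      rw [ha z, hb z]
    · intro c a ha z
      simp only [map_smul, LinearMap.smul_apply, smul_eq_mul]
      rw [ha z]
    · intro a b ha hb z
      rw [hSpanti, Dclaim (Sm z) (Sp b) (Sp a), antiSm]
      obtain ⟨m, p, q, hpq⟩ := tdecomp (Δm z)
      rw [hpq, map_sum, map_sum]
      simp only [hτ, hpair2]
      rw [Dclaim z a b, hpq, map_sum]
      simp only [hpair2]
      refine Finset.sum_congr rfl fun k _ => ?_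
      rw [ha (q k), hb (p k)]
      ring
  -- the five statements
  refine ⟨?_, ?_, ?_, ?_, ?_⟩
  · intro y
    rw [hρ1]
    rfl
  · intro x
    rw [rho_one x, hεsmul, hεm1, mul_one]
  · intro x y' y'' n a b hd
    rw [P3 x y' y'', hd]
    simp only [map_sum, LinearMap.coe_sum, Finset.sum_apply, hpair2]
  · intro x' x'' y n a b hd
    rw [Dclaim y x' x'', hd, map_sum]
    simp only [hpair2]
    exact Finset.sum_congr rfl fun k _ => mul_comm _ _
  · intro x y
    have h := Qclaim x (Sm.symm y)
    rwa [LinearEquiv.apply_symm_apply] at h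
end
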